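/- arXiv:1009.6152 — 7 statements merged into one kernel-verified Lean document; each statement's English description precedes it below -/
import Mathlib

section
/- Let $a > 0$ and let $q$ be a Lebesgue integrable function on $[0,a]$. For each $\rho > 0$ let $C_\rho : [0,a] \to \mathbb{R}$ be a continuous function satisfying the Volterra integral equation $C_\rho(x) = \cos(\rho x) + \frac{1}{\rho}\int_0^x \sin(\rho(x-t))\, q(t)\, C_\rho(t)\, dt$ for all $x \in [0,a]$. Set $K = \frac{1}{2}\int_0^a q(t)\, dt$. Then $\rho\Big( C_\rho(a) - \cos(\rho a) - \frac{K}{\rho}\sin(\rho a) \Big) \to 0$ as $\rho \to \infty$; that is, $C_\rho(a) = \cos(\rho a) + \rho^{-1} K \sin(\rho a) + o(\rho^{-1})$. -/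
open Real Filter MeasureTheory Set intervalIntegral
open scoped FourierTransform

lemma aux_intInt {a b : ℝ} (hb : b ∈ Set.Icc 0 a) {q : ℝ → ℝ}
    (hq : IntegrableOn q (Set.Icc 0 a)) {g : ℝ → ℝ} (hg : ContinuousOn g (Set.Icc 0 a)) :
    IntervalIntegrable (fun t => q t * g t) volume 0 b := by
  obtain ⟨hb0, hba⟩ := hb
  rw [intervalIntegrable_iff_integrableOn_Ioc_of_le hb0]
  obtain ⟨M, hM⟩ := isCompact_Icc.exists_bound_of_continuousOn hg
  have hsub : Set.Ioc 0 b ⊆ Set.Icc 0 a :=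
    subset_trans Set.Ioc_subset_Icc_self (Set.Icc_subset_Icc le_rfl hba)
  have hqI : IntegrableOn q (Set.Ioc 0 b) := hq.mono_set hsub
  have hmeas : AEStronglyMeasurable g (volume.restrict (Set.Ioc 0 b)) :=
    (hg.aestronglyMeasurable measurableSet_Icc).mono_measure
      (Measure.restrict_mono hsub le_rfl)
  have h2 := hqI.bdd_mul (c := M) hmeas ?_
  · exact h2.congr (by filter_upwards with x using mul_comm _ _)
  · filter_upwards [ae_restrict_mem measurableSet_Ioc] with x hx
    exact hM x (hsub hx)

lemma aux_bound {a : ℝ} (ha : (0:ℝ) ≤ a) {q : ℝ → ℝ}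
    (hq : IntegrableOn q (Set.Icc 0 a)) {b : ℝ} (hb : b ∈ Set.Icc 0 a) {g : ℝ → ℝ}
    (hg : ContinuousOn g (Set.Icc 0 a)) {M : ℝ} (hM : ∀ y ∈ Set.Icc (0:ℝ) a, |g y| ≤ M) :
    |∫ t in (0:ℝ)..b, q t * g t| ≤ (∫ t in (0:ℝ)..a, |q t|) * M := by
  have hM0 : 0 ≤ M := le_trans (abs_nonneg _) (hM 0 (Set.left_mem_Icc.2 ha))
  have habs : IntegrableOn (fun t => |q t|) (Set.Icc 0 a) := hq.abs
  have hQint : IntervalIntegrable (fun t => |q t|) volume 0 a := by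
    rw [intervalIntegrable_iff_integrableOn_Ioc_of_le ha]
    exact habs.mono_set Set.Ioc_subset_Icc_self
  have hqb : IntervalIntegrable (fun t => |q t|) volume 0 b := by
    rw [intervalIntegrable_iff_integrableOn_Ioc_of_le hb.1]
    exact habs.mono_set (subset_trans Set.Ioc_subset_Icc_self
      (Set.Icc_subset_Icc le_rfl hb.2))
  have hint : IntervalIntegrable (fun t => q t * g t) volume 0 b := aux_intInt hb hq hg
  calc |∫ t in (0:ℝ)..b, q t * g t| ≤ ∫ t in (0:ℝ)..b, |q t * g t| :=
        intervalIntegral.abs_integral_le_integral_abs hb.1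
    _ ≤ ∫ t in (0:ℝ)..b, |q t| * M := by
        refine intervalIntegral.integral_mono_on hb.1 hint.abs (hqb.mul_const M) ?_
        intro t ht
        rw [abs_mul]
        refine mul_le_mul_of_nonneg_left ?_ (abs_nonneg _)
        exact hM t (Set.Icc_subset_Icc le_rfl hb.2 ht)
    _ = (∫ t in (0:ℝ)..b, |q t|) * M := intervalIntegral.integral_mul_const M _
    _ ≤ (∫ t in (0:ℝ)..a, |q t|) * M := by
        refine mul_le_mul_of_nonneg_right ?_ hM0
        refine intervalIntegral.integral_mono_interval le_rfl hb.1 hb.2 ?_ hQint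
        filter_upwards with t using abs_nonneg _
lemma aux_RL {a : ℝ} (ha : (0:ℝ) ≤ a) {q : ℝ → ℝ} (hq : IntegrableOn q (Set.Icc 0 a)) :
    Tendsto (fun ρ : ℝ => ∫ t in (0:ℝ)..a, q t * Real.cos (2 * ρ * t)) atTop (nhds 0) ∧
    Tendsto (fun ρ : ℝ => ∫ t in (0:ℝ)..a, q t * Real.sin (2 * ρ * t)) atTop (nhds 0) := by
  set f : ℝ → ℂ := (Set.Icc 0 a).indicator (fun t => (q t : ℂ)) with hfdef
  have hqc : IntegrableOn (fun t => (q t : ℂ)) (Set.Icc 0 a) := hq.ofReal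
  have hfi : Integrable f := hqc.integrable_indicator measurableSet_Icc
  have h0 : Tendsto (𝓕 f) (cocompact ℝ) (nhds 0) := Real.zero_at_infty_fourier f
  have hcomp : Tendsto (fun ρ : ℝ => ρ / π) atTop (cocompact ℝ) := by
    refine (Tendsto.atTop_div_const Real.pi_pos tendsto_id).mono_right ?_
    rw [cocompact_eq_atBot_atTop]; exact le_sup_right
  have hF : Tendsto (fun ρ : ℝ => 𝓕 f (ρ / π)) atTop (nhds 0) := h0.comp hcomp
  -- compute the Fourier integral
  have hgi : ∀ ρ : ℝ, IntegrableOn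
      (fun t : ℝ => Complex.exp (↑(-(2 * ρ * t)) * Complex.I) * (q t : ℂ)) (Set.Icc 0 a) := by
    intro ρ
    refine hqc.bdd_mul (c := 1) ?_ ?_
    · exact (Continuous.aestronglyMeasurable (by continuity)).restrict
    · filter_upwards with t
      simp [Complex.norm_exp]
  have key : ∀ ρ : ℝ, 𝓕 f (ρ / π)
      = ∫ t in Set.Icc 0 a, Complex.exp (↑(-(2 * ρ * t)) * Complex.I) * (q t : ℂ) := by
    intro ρ
    rw [Real.fourier_real_eq_integral_exp_smul]
    simp_rw [smul_eq_mul]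
    rw [← MeasureTheory.integral_indicator measurableSet_Icc]
    have harg : ∀ t : ℝ, -2 * π * t * (ρ / π) = -(2 * ρ * t) := by
      intro t; field_simp
    congr 1; ext v
    rw [harg]
    by_cases hv : v ∈ Set.Icc 0 a <;> simp [hfdef, hv]
  have hre : ∀ ρ : ℝ, (𝓕 f (ρ / π)).re = ∫ t in (0:ℝ)..a, q t * Real.cos (2 * ρ * t) := by
    intro ρ
    rw [key ρ]
    have h1 := _root_.integral_re (μ := volume.restrict (Set.Icc 0 a)) (hgi ρ)
    simp only [RCLike.re_to_complex] at h1
    rw [← h1, intervalIntegral.integral_of_le ha, ← MeasureTheory.integral_Icc_eq_integral_Ioc]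
    congr 1; ext t
    rw [Complex.mul_re, Complex.ofReal_re, Complex.ofReal_im, mul_zero, sub_zero,
      Complex.exp_ofReal_mul_I_re, Real.cos_neg]
    ring
  have him : ∀ ρ : ℝ, (𝓕 f (ρ / π)).im = -∫ t in (0:ℝ)..a, q t * Real.sin (2 * ρ * t) := by
    intro ρ
    rw [key ρ]
    have h1 := _root_.integral_im (μ := volume.restrict (Set.Icc 0 a)) (hgi ρ)
    simp only [RCLike.im_to_complex] at h1
    rw [← h1, intervalIntegral.integral_of_le ha, ← MeasureTheory.integral_Icc_eq_integral_Ioc,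
      ← MeasureTheory.integral_neg]
    congr 1; ext t
    rw [Complex.mul_im, Complex.ofReal_re, Complex.ofReal_im, mul_zero, zero_add,
      Complex.exp_ofReal_mul_I_im, Real.sin_neg]
    ring
  constructor
  · have h3 : Tendsto (fun ρ : ℝ => (𝓕 f (ρ / π)).re) atTop (nhds 0) := by
      simpa [Function.comp_def] using (Complex.continuous_re.tendsto 0).comp hF
    exact h3.congr hre
  · have h3 : Tendsto (fun ρ : ℝ => (𝓕 f (ρ / π)).im) atTop (nhds 0) := by
      simpa [Function.comp_def] using (Complex.continuous_im.tendsto 0).comp hF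
    have h2 := h3.congr him
    simpa using h2.neg

/-- Asymptotics of the solution `C_ρ` of the Volterra equation associated with
`-y'' + q y = ρ² y`, `y(0)=1`, `y'(0)=0`:
`C_ρ(a) = cos(ρ a) + ρ⁻¹ K sin(ρ a) + o(ρ⁻¹)` as `ρ → ∞`,
where `K = (1/2) ∫₀ᵃ q`. -/
theorem cosine_solution_asymptotics
    (a : ℝ) (ha : 0 < a) (q : ℝ → ℝ)
    (hq : MeasureTheory.IntegrableOn q (Set.Icc 0 a))
    (C : ℝ → ℝ → ℝ)
    (hCcont : ∀ ρ : ℝ, 0 < ρ → ContinuousOn (C ρ) (Set.Icc 0 a))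
    (hC : ∀ ρ : ℝ, 0 < ρ → ∀ x ∈ Set.Icc (0 : ℝ) a,
      C ρ x = Real.cos (ρ * x) +
        (1 / ρ) * ∫ t in (0 : ℝ)..x, Real.sin (ρ * (x - t)) * q t * C ρ t)
    (K : ℝ) (hK : K = (1 / 2) * ∫ t in (0 : ℝ)..a, q t) :
    Tendsto
      (fun ρ : ℝ => ρ * (C ρ a - Real.cos (ρ * a) - (K / ρ) * Real.sin (ρ * a)))
      atTop (nhds 0) := by
  have ha' : (0:ℝ) ≤ a := ha.le
  set Q : ℝ := ∫ t in (0:ℝ)..a, |q t| with hQdef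
  have hQ0 : 0 ≤ Q := intervalIntegral.integral_nonneg ha' (fun t _ => abs_nonneg _)
  obtain ⟨hRLc, hRLs⟩ := aux_RL ha' hq
  -- a uniform bound on C ρ for large ρ
  have hCb : ∀ ρ : ℝ, 2 * Q + 1 ≤ ρ → ∀ x ∈ Set.Icc (0:ℝ) a, |C ρ x| ≤ 2 := by
    intro ρ hρ x hx
    have hρ0 : (0:ℝ) < ρ := lt_of_lt_of_le (by positivity) hρ
    obtain ⟨x₀, hx₀, hmax'⟩ := isCompact_Icc.exists_isMaxOn
      ⟨0, Set.left_mem_Icc.2 ha'⟩ (hCcont ρ hρ0).abs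
    have hmax : ∀ y ∈ Set.Icc (0:ℝ) a, |C ρ y| ≤ |C ρ x₀| := fun y hy => hmax' hy
    have hM0 : (0:ℝ) ≤ |C ρ x₀| := abs_nonneg _
    have hg : ContinuousOn (fun t => Real.sin (ρ * (x₀ - t)) * C ρ t) (Set.Icc 0 a) :=
      (Continuous.continuousOn (Real.continuous_sin.comp
        (continuous_const.mul (continuous_const.sub continuous_id)))).mul (hCcont ρ hρ0)
    have hgb : ∀ y ∈ Set.Icc (0:ℝ) a, |Real.sin (ρ * (x₀ - y)) * C ρ y| ≤ |C ρ x₀| := by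
      intro y hy
      rw [abs_mul]
      calc |Real.sin (ρ * (x₀ - y))| * |C ρ y| ≤ 1 * |C ρ y| :=
            mul_le_mul_of_nonneg_right (Real.abs_sin_le_one _) (abs_nonneg _)
        _ = |C ρ y| := one_mul _
        _ ≤ |C ρ x₀| := hmax y hy
    have hIb := aux_bound ha' hq hx₀ hg hgb
    have heqI : (∫ t in (0:ℝ)..x₀, Real.sin (ρ * (x₀ - t)) * q t * C ρ t)
        = ∫ t in (0:ℝ)..x₀, q t * (Real.sin (ρ * (x₀ - t)) * C ρ t) := by
      refine intervalIntegral.integral_congr (fun t _ => ?_); ring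
    have heq := hC ρ hρ0 x₀ hx₀
    have hQρ : Q / ρ ≤ 1 / 2 := by
      rw [div_le_div_iff₀ hρ0 (by norm_num)]
      linarith
    have hMle : |C ρ x₀| ≤ 2 := by
      have h1 : |C ρ x₀| ≤ 1 + (1/ρ) * (Q * |C ρ x₀|) := by
        nth_rewrite 1 [heq]
        calc |Real.cos (ρ * x₀) + (1/ρ) * ∫ t in (0:ℝ)..x₀,
              Real.sin (ρ * (x₀ - t)) * q t * C ρ t|
            ≤ |Real.cos (ρ * x₀)| + |(1/ρ) * ∫ t in (0:ℝ)..x₀,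
              Real.sin (ρ * (x₀ - t)) * q t * C ρ t| := abs_add_le _ _
          _ ≤ 1 + (1/ρ) * (Q * |C ρ x₀|) := by
              gcongr
              · exact Real.abs_cos_le_one _
              · rw [abs_mul, abs_of_nonneg (by positivity : (0:ℝ) ≤ 1/ρ), heqI]
                exact mul_le_mul_of_nonneg_left hIb (by positivity)
      have h2 : (1/ρ) * (Q * |C ρ x₀|) = (Q/ρ) * |C ρ x₀| := by ring
      have h3 : (Q/ρ) * |C ρ x₀| ≤ (1/2) * |C ρ x₀| := mul_le_mul_of_nonneg_right hQρ hM0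
      linarith
    exact le_trans (hmax x hx) hMle
  -- bound on the difference C ρ x - cos (ρ x)
  have hD : ∀ ρ : ℝ, 2 * Q + 1 ≤ ρ → ∀ x ∈ Set.Icc (0:ℝ) a,
      |C ρ x - Real.cos (ρ * x)| ≤ 2 * Q / ρ := by
    intro ρ hρ x hx
    have hρ0 : (0:ℝ) < ρ := lt_of_lt_of_le (by positivity) hρ
    have hg : ContinuousOn (fun t => Real.sin (ρ * (x - t)) * C ρ t) (Set.Icc 0 a) :=
      (Continuous.continuousOn (Real.continuous_sin.comp
        (continuous_const.mul (continuous_const.sub continuous_id)))).mul (hCcont ρ hρ0)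
    have hgb : ∀ y ∈ Set.Icc (0:ℝ) a, |Real.sin (ρ * (x - y)) * C ρ y| ≤ 2 := by
      intro y hy
      rw [abs_mul]
      calc |Real.sin (ρ * (x - y))| * |C ρ y| ≤ 1 * 2 := by
            exact mul_le_mul (Real.abs_sin_le_one _) (hCb ρ hρ y hy) (abs_nonneg _) zero_le_one
        _ = 2 := one_mul _
    have hIb := aux_bound ha' hq hx hg hgb
    have heqI : (∫ t in (0:ℝ)..x, Real.sin (ρ * (x - t)) * q t * C ρ t)
        = ∫ t in (0:ℝ)..x, q t * (Real.sin (ρ * (x - t)) * C ρ t) := by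
      refine intervalIntegral.integral_congr (fun t _ => ?_); ring
    have heq := hC ρ hρ0 x hx
    have : C ρ x - Real.cos (ρ * x) = (1/ρ) * ∫ t in (0:ℝ)..x,
        Real.sin (ρ * (x - t)) * q t * C ρ t := by rw [heq]; ring
    rw [this, abs_mul, abs_of_nonneg (by positivity : (0:ℝ) ≤ 1/ρ), heqI]
    calc (1/ρ) * |∫ t in (0:ℝ)..x, q t * (Real.sin (ρ * (x - t)) * C ρ t)|
        ≤ (1/ρ) * (Q * 2) := mul_le_mul_of_nonneg_left hIb (by positivity)
      _ = 2 * Q / ρ := by ring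
  -- the main algebraic identity
  have hkey : ∀ ρ : ℝ, 2 * Q + 1 ≤ ρ →
      ρ * (C ρ a - Real.cos (ρ * a) - (K / ρ) * Real.sin (ρ * a))
        = (∫ t in (0:ℝ)..a, q t * (Real.sin (ρ*(a-t)) * (C ρ t - Real.cos (ρ*t))))
          + Real.sin (ρ*a)/2 * (∫ t in (0:ℝ)..a, q t * Real.cos (2*ρ*t))
          - Real.cos (ρ*a)/2 * (∫ t in (0:ℝ)..a, q t * Real.sin (2*ρ*t)) := by
    intro ρ hρ
    have hρ0 : (0:ℝ) < ρ := lt_of_lt_of_le (by positivity) hρ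
    have hmem : a ∈ Set.Icc (0:ℝ) a := Set.right_mem_Icc.2 ha'
    have heq := hC ρ hρ0 a hmem
    have hsc : Continuous (fun t : ℝ => Real.sin (ρ*(a-t))) :=
      Real.continuous_sin.comp (continuous_const.mul (continuous_const.sub continuous_id))
    have hg1 : ContinuousOn (fun t => Real.sin (ρ*(a-t)) * (C ρ t - Real.cos (ρ*t)))
        (Set.Icc 0 a) :=
      hsc.continuousOn.mul ((hCcont ρ hρ0).sub (Real.continuous_cos.comp
        (continuous_const.mul continuous_id)).continuousOn)
    have hg2 : Continuous (fun t : ℝ => Real.sin (ρ*(a-t)) * Real.cos (ρ*t)) :=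
      hsc.mul (Real.continuous_cos.comp (continuous_const.mul continuous_id))
    have h1 : IntervalIntegrable
        (fun t => q t * (Real.sin (ρ*(a-t)) * (C ρ t - Real.cos (ρ*t)))) volume 0 a :=
      aux_intInt hmem hq hg1
    have h2 : IntervalIntegrable
        (fun t => q t * (Real.sin (ρ*(a-t)) * Real.cos (ρ*t))) volume 0 a :=
      aux_intInt hmem hq hg2.continuousOn
    have hq1 : IntervalIntegrable q volume 0 a := by
      rw [intervalIntegrable_iff_integrableOn_Ioc_of_le ha']
      exact hq.mono_set Set.Ioc_subset_Icc_self
    have hqc2 : IntervalIntegrable (fun t => q t * Real.cos (2*ρ*t)) volume 0 a :=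
      aux_intInt hmem hq (Continuous.continuousOn (Real.continuous_cos.comp (by continuity)))
    have hqs2 : IntervalIntegrable (fun t => q t * Real.sin (2*ρ*t)) volume 0 a :=
      aux_intInt hmem hq (Continuous.continuousOn (Real.continuous_sin.comp (by continuity)))
    have hJsplit : (∫ t in (0:ℝ)..a, Real.sin (ρ*(a-t)) * q t * C ρ t)
        = (∫ t in (0:ℝ)..a, q t * (Real.sin (ρ*(a-t)) * (C ρ t - Real.cos (ρ*t))))
          + ∫ t in (0:ℝ)..a, q t * (Real.sin (ρ*(a-t)) * Real.cos (ρ*t)) := by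
      rw [← intervalIntegral.integral_add h1 h2]
      refine intervalIntegral.integral_congr (fun t _ => ?_); ring
    have trig : ∀ t : ℝ, Real.sin (ρ*(a-t)) * Real.cos (ρ*t)
        = Real.sin (ρ*a)/2 + Real.sin (ρ*a)/2 * Real.cos (2*ρ*t)
          - Real.cos (ρ*a)/2 * Real.sin (2*ρ*t) := by
      intro t
      have h1' : ρ*(a-t) = ρ*a - ρ*t := by ring
      have h2' : 2*ρ*t = ρ*t + ρ*t := by ring
      rw [h1', Real.sin_sub, h2', Real.cos_add, Real.sin_add]
      linear_combination (Real.sin (ρ*a)/2) * Real.sin_sq_add_cos_sq (ρ*t)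
    have hJ2 : (∫ t in (0:ℝ)..a, q t * (Real.sin (ρ*(a-t)) * Real.cos (ρ*t)))
        = (∫ t in (0:ℝ)..a, q t) * (Real.sin (ρ*a)/2)
          + Real.sin (ρ*a)/2 * (∫ t in (0:ℝ)..a, q t * Real.cos (2*ρ*t))
          - Real.cos (ρ*a)/2 * (∫ t in (0:ℝ)..a, q t * Real.sin (2*ρ*t)) := by
      have step1 : (∫ t in (0:ℝ)..a, q t * (Real.sin (ρ*(a-t)) * Real.cos (ρ*t)))
          = ∫ t in (0:ℝ)..a, (q t * (Real.sin (ρ*a)/2)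
              + (Real.sin (ρ*a)/2 * (q t * Real.cos (2*ρ*t))
                - Real.cos (ρ*a)/2 * (q t * Real.sin (2*ρ*t)))) := by
        refine intervalIntegral.integral_congr (fun t _ => ?_)
        rw [trig t]; ring
      rw [step1, intervalIntegral.integral_add (hq1.mul_const _)
          ((hqc2.const_mul _).sub (hqs2.const_mul _)),
        intervalIntegral.integral_sub (hqc2.const_mul _) (hqs2.const_mul _),
        intervalIntegral.integral_mul_const, intervalIntegral.integral_const_mul,
        intervalIntegral.integral_const_mul]
      ring
    have hCa : C ρ a - Real.cos (ρ*a)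
        = (1/ρ) * ∫ t in (0:ℝ)..a, Real.sin (ρ*(a-t)) * q t * C ρ t := by
      rw [heq]; ring
    have hstep : ρ * (C ρ a - Real.cos (ρ * a) - (K / ρ) * Real.sin (ρ * a))
        = (∫ t in (0:ℝ)..a, Real.sin (ρ*(a-t)) * q t * C ρ t) - K * Real.sin (ρ*a) := by
      have h5 : C ρ a - Real.cos (ρ * a) - (K / ρ) * Real.sin (ρ * a)
          = (1/ρ) * (∫ t in (0:ℝ)..a, Real.sin (ρ*(a-t)) * q t * C ρ t)
            - (K/ρ) * Real.sin (ρ*a) := by rw [← hCa]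
      rw [h5]
      field_simp
    rw [hstep, hJsplit, hJ2, hK]
    ring
  -- the error term tends to zero
  have hE : Tendsto (fun ρ : ℝ => ∫ t in (0:ℝ)..a,
      q t * (Real.sin (ρ*(a-t)) * (C ρ t - Real.cos (ρ*t)))) atTop (nhds 0) := by
    have hlim : Tendsto (fun ρ : ℝ => Q * (2*Q/ρ)) atTop (nhds 0) := by
      have h6 : Tendsto (fun ρ : ℝ => (2*Q)/ρ) atTop (nhds 0) :=
        tendsto_const_nhds.div_atTop tendsto_id
      have h7 := h6.const_mul Q
      simpa [mul_div_assoc] using h7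
    refine squeeze_zero_norm' ?_ hlim
    filter_upwards [eventually_ge_atTop (2*Q+1)] with ρ hρ
    have hρ0 : (0:ℝ) < ρ := lt_of_lt_of_le (by positivity) hρ
    have hsc : Continuous (fun t : ℝ => Real.sin (ρ*(a-t))) :=
      Real.continuous_sin.comp (continuous_const.mul (continuous_const.sub continuous_id))
    have hg1 : ContinuousOn (fun t => Real.sin (ρ*(a-t)) * (C ρ t - Real.cos (ρ*t)))
        (Set.Icc 0 a) :=
      hsc.continuousOn.mul ((hCcont ρ hρ0).sub (Real.continuous_cos.comp
        (continuous_const.mul continuous_id)).continuousOn)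
    rw [Real.norm_eq_abs]
    refine aux_bound ha' hq (Set.right_mem_Icc.2 ha') hg1 ?_
    intro y hy
    rw [abs_mul]
    calc |Real.sin (ρ*(a-y))| * |C ρ y - Real.cos (ρ*y)| ≤ 1 * (2*Q/ρ) :=
          mul_le_mul (Real.abs_sin_le_one _) (hD ρ hρ y hy) (abs_nonneg _) zero_le_one
      _ = 2*Q/ρ := one_mul _
  -- the Riemann-Lebesgue terms tend to zero
  have hS : Tendsto (fun ρ : ℝ => Real.sin (ρ*a)/2
      * (∫ t in (0:ℝ)..a, q t * Real.cos (2*ρ*t))) atTop (nhds 0) := by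
    have h4 : Tendsto (fun ρ : ℝ => |∫ t in (0:ℝ)..a, q t * Real.cos (2*ρ*t)|)
        atTop (nhds 0) := by simpa using hRLc.abs
    refine squeeze_zero_norm (fun ρ => ?_) h4
    rw [Real.norm_eq_abs, abs_mul]
    refine mul_le_of_le_one_left (abs_nonneg _) ?_
    rw [abs_div]
    calc |Real.sin (ρ*a)| / |(2:ℝ)| ≤ 1 / 2 := by
          rw [abs_two]
          exact div_le_div_of_nonneg_right (Real.abs_sin_le_one _) (by norm_num) |>.trans le_rfl
      _ ≤ 1 := by norm_num
  have hT : Tendsto (fun ρ : ℝ => Real.cos (ρ*a)/2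
      * (∫ t in (0:ℝ)..a, q t * Real.sin (2*ρ*t))) atTop (nhds 0) := by
    have h4 : Tendsto (fun ρ : ℝ => |∫ t in (0:ℝ)..a, q t * Real.sin (2*ρ*t)|)
        atTop (nhds 0) := by simpa using hRLs.abs
    refine squeeze_zero_norm (fun ρ => ?_) h4
    rw [Real.norm_eq_abs, abs_mul]
    refine mul_le_of_le_one_left (abs_nonneg _) ?_
    rw [abs_div]
    calc |Real.cos (ρ*a)| / |(2:ℝ)| ≤ 1 / 2 := by
          rw [abs_two]
          exact div_le_div_of_nonneg_right (Real.abs_cos_le_one _) (by norm_num) |>.trans le_rfl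
      _ ≤ 1 := by norm_num
  have hfinal : Tendsto (fun ρ : ℝ =>
      (∫ t in (0:ℝ)..a, q t * (Real.sin (ρ*(a-t)) * (C ρ t - Real.cos (ρ*t))))
        + Real.sin (ρ*a)/2 * (∫ t in (0:ℝ)..a, q t * Real.cos (2*ρ*t))
        - Real.cos (ρ*a)/2 * (∫ t in (0:ℝ)..a, q t * Real.sin (2*ρ*t)))
      atTop (nhds 0) := by
    simpa using (hE.add hS).sub hT
  refine Tendsto.congr' ?_ hfinal
  filter_upwards [eventually_ge_atTop (2*Q+1)] with ρ hρ
  exact (hkey ρ hρ).symm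
end

section
/- Let $a > 0$ and let $q$ be a Lebesgue integrable function on $[0,a]$. For each $\rho > 0$ let $C_\rho : [0,a] \to \mathbb{R}$ be a continuous function satisfying $C_\rho(x) = \cos(\rho x) + \frac{1}{\rho}\int_0^x \sin(\rho(x-t))\, q(t)\, C_\rho(t)\, dt$ for all $x \in [0,a]$, and define $D_\rho(x) = -\rho \sin(\rho x) + \int_0^x \cos(\rho(x-t))\, q(t)\, C_\rho(t)\, dt$ (which equals the derivative $C_\rho'(x)$). Set $K = \frac{1}{2}\int_0^a q(t)\, dt$. Then $D_\rho(a) + \rho \sin(\rho a) - K \cos(\rho a) \to 0$ as $\rho \to \infty$; that is, $C_\rho'(a) = -\rho \sin(\rho a) + K \cos(\rho a) + o(1)$. -/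
open Real Filter MeasureTheory FourierTransform

private lemma RL_exp (f : ℝ → ℝ) (hf : MeasureTheory.Integrable f) :
    Tendsto (fun w : ℝ => ∫ t : ℝ, Complex.exp (w * t * Complex.I) * (f t : ℂ))
      atTop (nhds 0) := by
  have h0 := Real.zero_at_infty_fourier (fun t : ℝ => (f t : ℂ))
  have hφ : Tendsto (fun ρ : ℝ => -ρ / (2 * π)) atTop (Filter.cocompact ℝ) := by
    rw [cocompact_eq_atBot_atTop]
    refine Tendsto.mono_right ?_ le_sup_left
    apply Tendsto.atBot_div_const (by positivity)
    exact tendsto_neg_atBot_iff.mpr tendsto_id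
  have h1 := h0.comp hφ
  convert h1 using 2 with ρ
  simp only [Function.comp_apply, Real.fourier_real_eq_integral_exp_smul]
  congr 1 with v
  rw [smul_eq_mul]
  congr 2
  push_cast
  have hπ' : (π : ℂ) ≠ 0 := by exact_mod_cast Real.pi_ne_zero
  field_simp

private lemma RL_int (f : ℝ → ℝ) (hf : MeasureTheory.Integrable f) (w : ℝ) :
    MeasureTheory.Integrable (fun t : ℝ => Complex.exp (w * t * Complex.I) * (f t : ℂ)) := by
  refine (hf.ofReal.bdd_mul ((Complex.continuous_exp.comp (by continuity)).aestronglyMeasurable) (c := 1) (Filter.Eventually.of_forall fun t => ?_))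
  refine le_of_eq ?_
  rw [show ((w : ℂ) * t * Complex.I) = ((w * t : ℝ) : ℂ) * Complex.I by push_cast; ring,
    Complex.norm_exp_ofReal_mul_I]

private lemma RL_cos (f : ℝ → ℝ) (hf : MeasureTheory.Integrable f) :
    Tendsto (fun w : ℝ => ∫ t : ℝ, f t * Real.cos (w * t)) atTop (nhds 0) := by
  have h := (Complex.continuous_re.tendsto 0).comp (RL_exp f hf)
  simp only [Complex.zero_re] at h
  convert h using 2 with w
  rw [Function.comp_apply,
    show (∫ t : ℝ, Complex.exp (w * t * Complex.I) * (f t : ℂ)).re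
      = RCLike.re (∫ t : ℝ, Complex.exp (w * t * Complex.I) * (f t : ℂ)) from rfl,
    ← integral_re (RL_int f hf w)]
  congr 1 with t
  rw [show ((w : ℂ) * t * Complex.I) = ((w * t : ℝ) : ℂ) * Complex.I by push_cast; ring,
    RCLike.re_to_complex, Complex.mul_re]
  simp only [Complex.ofReal_re, Complex.ofReal_im, Complex.exp_ofReal_mul_I_re,
    Complex.exp_ofReal_mul_I_im, mul_zero, sub_zero]
  ring

private lemma RL_sin (f : ℝ → ℝ) (hf : MeasureTheory.Integrable f) :
    Tendsto (fun w : ℝ => ∫ t : ℝ, f t * Real.sin (w * t)) atTop (nhds 0) := by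
  have h := (Complex.continuous_im.tendsto 0).comp (RL_exp f hf)
  simp only [Complex.zero_im] at h
  convert h using 2 with w
  rw [Function.comp_apply,
    show (∫ t : ℝ, Complex.exp (w * t * Complex.I) * (f t : ℂ)).im
      = RCLike.im (∫ t : ℝ, Complex.exp (w * t * Complex.I) * (f t : ℂ)) from rfl,
    ← integral_im (RL_int f hf w)]
  congr 1 with t
  rw [show ((w : ℂ) * t * Complex.I) = ((w * t : ℝ) : ℂ) * Complex.I by push_cast; ring,
    RCLike.im_to_complex, Complex.mul_im]
  simp only [Complex.ofReal_re, Complex.ofReal_im, Complex.exp_ofReal_mul_I_re,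
    Complex.exp_ofReal_mul_I_im, mul_zero, zero_add, add_zero]
  ring

private lemma RL_cos_interval (a : ℝ) (ha : 0 < a) (q : ℝ → ℝ)
    (hq : MeasureTheory.IntegrableOn q (Set.Icc 0 a)) :
    Tendsto (fun w : ℝ => ∫ t in (0:ℝ)..a, q t * Real.cos (w * t)) atTop (nhds 0) := by
  set f : ℝ → ℝ := (Set.Ioc 0 a).indicator q with hf
  have hfi : MeasureTheory.Integrable f :=
    ((hq.mono_set Set.Ioc_subset_Icc_self).integrable_indicator measurableSet_Ioc)
  have h := RL_cos f hfi
  convert h using 2 with w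
  rw [intervalIntegral.integral_of_le ha.le,
    ← MeasureTheory.integral_indicator measurableSet_Ioc]
  congr 1 with t
  by_cases h : t ∈ Set.Ioc (0:ℝ) a <;> simp [hf, Set.indicator_apply, h]

private lemma RL_sin_interval (a : ℝ) (ha : 0 < a) (q : ℝ → ℝ)
    (hq : MeasureTheory.IntegrableOn q (Set.Icc 0 a)) :
    Tendsto (fun w : ℝ => ∫ t in (0:ℝ)..a, q t * Real.sin (w * t)) atTop (nhds 0) := by
  set f : ℝ → ℝ := (Set.Ioc 0 a).indicator q with hf
  have hfi : MeasureTheory.Integrable f :=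
    ((hq.mono_set Set.Ioc_subset_Icc_self).integrable_indicator measurableSet_Ioc)
  have h := RL_sin f hfi
  convert h using 2 with w
  rw [intervalIntegral.integral_of_le ha.le,
    ← MeasureTheory.integral_indicator measurableSet_Ioc]
  congr 1 with t
  by_cases h : t ∈ Set.Ioc (0:ℝ) a <;> simp [hf, Set.indicator_apply, h]

private lemma key_bound {a x B : ℝ} (ha : 0 < a) (hx : x ∈ Set.Icc (0:ℝ) a)
    {q g h : ℝ → ℝ} (hq : MeasureTheory.IntegrableOn q (Set.Icc 0 a))
    (hint : IntervalIntegrable (fun t => g t * (q t * h t)) MeasureTheory.volume 0 x)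
    (hg : ∀ t, |g t| ≤ 1) (hh : ∀ t ∈ Set.Icc (0:ℝ) a, |h t| ≤ B) (hB : 0 ≤ B) :
    |∫ t in (0:ℝ)..x, g t * (q t * h t)| ≤ (∫ t in (0:ℝ)..a, |q t|) * B := by
  have hIcc : Set.Icc (0:ℝ) x ⊆ Set.Icc 0 a := Set.Icc_subset_Icc le_rfl hx.2
  have hqx : IntervalIntegrable q MeasureTheory.volume 0 x := by
    rw [intervalIntegrable_iff_integrableOn_Ioc_of_le hx.1]
    exact hq.mono_set (Set.Ioc_subset_Icc_self.trans hIcc)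
  have hqa : IntervalIntegrable q MeasureTheory.volume 0 a := by
    rw [intervalIntegrable_iff_integrableOn_Ioc_of_le ha.le]
    exact hq.mono_set Set.Ioc_subset_Icc_self
  calc |∫ t in (0:ℝ)..x, g t * (q t * h t)|
      ≤ ∫ t in (0:ℝ)..x, |g t * (q t * h t)| :=
        intervalIntegral.abs_integral_le_integral_abs hx.1
    _ ≤ ∫ t in (0:ℝ)..x, |q t| * B := by
        refine intervalIntegral.integral_mono_on hx.1 hint.abs (hqx.abs.mul_const B) ?_
        intro t ht
        have ht' := hIcc ht
        rw [abs_mul, abs_mul]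
        calc |g t| * (|q t| * |h t|)
            ≤ 1 * (|q t| * |h t|) :=
              mul_le_mul_of_nonneg_right (hg t) (by positivity)
          _ = |q t| * |h t| := one_mul _
          _ ≤ |q t| * B := mul_le_mul_of_nonneg_left (hh t ht') (abs_nonneg _)
    _ ≤ ∫ t in (0:ℝ)..a, |q t| * B := by
        refine intervalIntegral.integral_mono_interval le_rfl hx.1 hx.2 ?_ (hqa.abs.mul_const B)
        filter_upwards with t using mul_nonneg (abs_nonneg _) hB
    _ = (∫ t in (0:ℝ)..a, |q t|) * B := intervalIntegral.integral_mul_const _ _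

/-- Asymptotics of the derivative of the solution `C_ρ` of the Volterra equation
associated with `-y'' + q y = ρ² y`, `y(0)=1`, `y'(0)=0`:
`C_ρ'(a) = -ρ sin(ρ a) + K cos(ρ a) + o(1)` as `ρ → ∞`,
where `K = (1/2) ∫₀ᵃ q` and `D_ρ = C_ρ'` is given by the stated formula. -/
theorem cosine_solution_derivative_asymptotics
    (a : ℝ) (ha : 0 < a) (q : ℝ → ℝ)
    (hq : MeasureTheory.IntegrableOn q (Set.Icc 0 a))
    (C : ℝ → ℝ → ℝ)
    (hCcont : ∀ ρ : ℝ, 0 < ρ → ContinuousOn (C ρ) (Set.Icc 0 a))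
    (hC : ∀ ρ : ℝ, 0 < ρ → ∀ x ∈ Set.Icc (0 : ℝ) a,
      C ρ x = Real.cos (ρ * x) +
        (1 / ρ) * ∫ t in (0 : ℝ)..x, Real.sin (ρ * (x - t)) * q t * C ρ t)
    (D : ℝ → ℝ → ℝ)
    (hD : ∀ ρ : ℝ, 0 < ρ → ∀ x ∈ Set.Icc (0 : ℝ) a,
      D ρ x = -ρ * Real.sin (ρ * x) +
        ∫ t in (0 : ℝ)..x, Real.cos (ρ * (x - t)) * q t * C ρ t)
    (K : ℝ) (hK : K = (1 / 2) * ∫ t in (0 : ℝ)..a, q t) :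
    Tendsto
      (fun ρ : ℝ => D ρ a + ρ * Real.sin (ρ * a) - K * Real.cos (ρ * a))
      atTop (nhds 0) := by
  have hIcc : ∀ x : ℝ, x ∈ Set.Icc (0:ℝ) a → Set.Icc (0:ℝ) x ⊆ Set.Icc 0 a :=
    fun x hx => Set.Icc_subset_Icc le_rfl hx.2
  have haI : a ∈ Set.Icc (0:ℝ) a := ⟨ha.le, le_rfl⟩
  have hqa : IntervalIntegrable q MeasureTheory.volume 0 a := by
    rw [intervalIntegrable_iff_integrableOn_Ioc_of_le ha.le]
    exact hq.mono_set Set.Ioc_subset_Icc_self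
  set Q : ℝ := ∫ t in (0:ℝ)..a, |q t| with hQdef
  have hQ0 : 0 ≤ Q := intervalIntegral.integral_nonneg ha.le (fun t _ => abs_nonneg _)
  set R : ℝ := 2 * Q + 1 with hRdef
  -- integrability of products
  have hqCI : ∀ g h : ℝ → ℝ, Continuous g → ContinuousOn h (Set.Icc 0 a) →
      ∀ x ∈ Set.Icc (0:ℝ) a,
      IntervalIntegrable (fun t => g t * (q t * h t)) MeasureTheory.volume 0 x := by
    intro g h hg hh x hx
    rw [intervalIntegrable_iff_integrableOn_Ioc_of_le hx.1]
    exact (MeasureTheory.IntegrableOn.continuousOn_mul hg.continuousOn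
      (hq.mul_continuousOn hh isCompact_Icc) isCompact_Icc).mono_set
      (Set.Ioc_subset_Icc_self.trans (hIcc x hx))
  -- uniform bound on C ρ for large ρ
  have hCbd : ∀ ρ : ℝ, R ≤ ρ → ∀ t ∈ Set.Icc (0:ℝ) a, |C ρ t| ≤ 2 := by
    intro ρ hρR
    have hρ : (0:ℝ) < ρ := by rw [hRdef] at hρR; linarith
    obtain ⟨t₀, ht₀, hmax⟩ := isCompact_Icc.exists_isMaxOn (Set.nonempty_Icc.mpr ha.le)
      (hCcont ρ hρ).abs
    have hmax' : ∀ t ∈ Set.Icc (0:ℝ) a, |C ρ t| ≤ |C ρ t₀| := hmax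
    have hM0 : 0 ≤ |C ρ t₀| := abs_nonneg _
    have heq0 := hC ρ hρ t₀ ht₀
    simp_rw [mul_assoc] at heq0
    have hII : IntervalIntegrable (fun t => Real.sin (ρ*(t₀-t)) * (q t * C ρ t))
        MeasureTheory.volume 0 t₀ :=
      hqCI _ _ (by fun_prop) (hCcont ρ hρ) t₀ ht₀
    have hbd := key_bound ha ht₀ hq hII (fun t => Real.abs_sin_le_one _) hmax' hM0
    rw [← hQdef] at hbd
    have hb : |C ρ t₀| ≤ 1 + (1/ρ) * (Q * |C ρ t₀|) := by
      nth_rewrite 1 [heq0]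
      refine (abs_add_le _ _).trans ?_
      have h1 : |Real.cos (ρ * t₀)| ≤ 1 := Real.abs_cos_le_one _
      rw [abs_mul, abs_of_pos (by positivity : (0:ℝ) < 1/ρ)]
      have := mul_le_mul_of_nonneg_left hbd (le_of_lt (by positivity : (0:ℝ) < 1/ρ))
      linarith
    have hM2 : |C ρ t₀| ≤ 2 := by
      have hρ' : ρ * |C ρ t₀| ≤ ρ * (1 + (1/ρ) * (Q * |C ρ t₀|)) :=
        mul_le_mul_of_nonneg_left hb hρ.le
      rw [mul_add, ← mul_assoc, mul_one_div_cancel hρ.ne', one_mul, mul_one] at hρ'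
      nlinarith
    intro t ht
    exact (hmax' t ht).trans hM2
  -- deviation of C ρ from cos
  have hdiff : ∀ ρ : ℝ, R ≤ ρ → ∀ x ∈ Set.Icc (0:ℝ) a,
      |C ρ x - Real.cos (ρ*x)| ≤ 2*Q/ρ := by
    intro ρ hρR x hx
    have hρ : (0:ℝ) < ρ := by rw [hRdef] at hρR; linarith
    have heq0 := hC ρ hρ x hx
    simp_rw [mul_assoc] at heq0
    have hII : IntervalIntegrable (fun t => Real.sin (ρ*(x-t)) * (q t * C ρ t))
        MeasureTheory.volume 0 x :=
      hqCI _ _ (by fun_prop) (hCcont ρ hρ) x hx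
    have hbd := key_bound ha hx hq hII (fun t => Real.abs_sin_le_one _)
      (hCbd ρ hρR) (by norm_num)
    rw [heq0, add_sub_cancel_left, abs_mul, abs_of_pos (by positivity : (0:ℝ) < 1/ρ)]
    have := mul_le_mul_of_nonneg_left hbd (le_of_lt (by positivity : (0:ℝ) < 1/ρ))
    calc (1/ρ) * |∫ t in (0:ℝ)..x, Real.sin (ρ*(x-t)) * (q t * C ρ t)|
        ≤ (1/ρ) * (Q * 2) := this
      _ = 2*Q/ρ := by ring
  -- the main algebraic identity
  have heqMain : ∀ ρ : ℝ, R ≤ ρ →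
      D ρ a + ρ * Real.sin (ρ * a) - K * Real.cos (ρ * a)
      = (1/2*Real.cos (ρ*a)) * (∫ t in (0:ℝ)..a, q t * Real.cos (2*ρ*t))
        + (1/2*Real.sin (ρ*a)) * (∫ t in (0:ℝ)..a, q t * Real.sin (2*ρ*t))
        + ∫ t in (0:ℝ)..a, Real.cos (ρ*(a-t)) * (q t * (C ρ t - Real.cos (ρ*t))) := by
    intro ρ hρR
    have hρ : (0:ℝ) < ρ := by rw [hRdef] at hρR; linarith
    have hDa := hD ρ hρ a haI
    simp_rw [mul_assoc] at hDa
    have int1 : IntervalIntegrable (fun t => Real.cos (ρ*(a-t)) * (q t * (C ρ t - Real.cos (ρ*t))))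
        MeasureTheory.volume 0 a :=
      hqCI _ _ (by fun_prop) ((hCcont ρ hρ).sub (by fun_prop : Continuous fun t => Real.cos (ρ*t)).continuousOn) a haI
    have int2 : IntervalIntegrable (fun t => (1/2*Real.cos (ρ*a)) * q t)
        MeasureTheory.volume 0 a := hqa.const_mul _
    have int3 : IntervalIntegrable (fun t => (1/2*Real.cos (ρ*a)) * (q t * Real.cos (2*ρ*t)))
        MeasureTheory.volume 0 a :=
      (hqa.mul_continuousOn (by fun_prop : Continuous fun t => Real.cos (2*ρ*t)).continuousOn).const_mul _
    have int4 : IntervalIntegrable (fun t => (1/2*Real.sin (ρ*a)) * (q t * Real.sin (2*ρ*t)))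
        MeasureTheory.volume 0 a :=
      (hqa.mul_continuousOn (by fun_prop : Continuous fun t => Real.sin (2*ρ*t)).continuousOn).const_mul _
    have hsplit : (∫ t in (0:ℝ)..a, Real.cos (ρ*(a-t)) * (q t * C ρ t))
        = (∫ t in (0:ℝ)..a, Real.cos (ρ*(a-t)) * (q t * (C ρ t - Real.cos (ρ*t))))
          + ((∫ t in (0:ℝ)..a, (1/2*Real.cos (ρ*a)) * q t)
          + ((∫ t in (0:ℝ)..a, (1/2*Real.cos (ρ*a)) * (q t * Real.cos (2*ρ*t)))
          + (∫ t in (0:ℝ)..a, (1/2*Real.sin (ρ*a)) * (q t * Real.sin (2*ρ*t))))) := by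
      rw [← intervalIntegral.integral_add int3 int4, ← intervalIntegral.integral_add int2 (int3.add int4),
        ← intervalIntegral.integral_add int1 (int2.add (int3.add int4))]
      apply intervalIntegral.integral_congr
      intro t ht
      have e1 := Real.cos_add (ρ*(a-t)) (ρ*t)
      have e2 := Real.cos_sub (ρ*(a-t)) (ρ*t)
      have h1 : ρ*(a-t) + ρ*t = ρ*a := by ring
      have h2 : ρ*(a-t) - ρ*t = ρ*a - 2*ρ*t := by ring
      rw [h1] at e1
      rw [h2] at e2
      have e3 := Real.cos_sub (ρ*a) (2*ρ*t)
      simp only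
      linear_combination (q t/2) * e3 - (q t/2) * e1 + (q t/2) * e2 - q t * e2
    rw [hDa, hsplit, hK]
    rw [intervalIntegral.integral_const_mul, intervalIntegral.integral_const_mul,
      intervalIntegral.integral_const_mul]
    ring
  -- convergence of each piece
  have hIc : Tendsto (fun ρ : ℝ => ∫ t in (0:ℝ)..a, q t * Real.cos (2*ρ*t)) atTop (nhds 0) :=
    (RL_cos_interval a ha q hq).comp (Filter.Tendsto.const_mul_atTop two_pos tendsto_id)
  have hIs : Tendsto (fun ρ : ℝ => ∫ t in (0:ℝ)..a, q t * Real.sin (2*ρ*t)) atTop (nhds 0) :=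
    (RL_sin_interval a ha q hq).comp (Filter.Tendsto.const_mul_atTop two_pos tendsto_id)
  have t1 : Tendsto (fun ρ : ℝ => (1/2*Real.cos (ρ*a)) * (∫ t in (0:ℝ)..a, q t * Real.cos (2*ρ*t)))
      atTop (nhds 0) := by
    have hgt : Tendsto (fun ρ : ℝ => 1/2 * |∫ t in (0:ℝ)..a, q t * Real.cos (2*ρ*t)|)
        atTop (nhds 0) := by simpa using (hIc.abs).const_mul (1/2:ℝ)
    refine squeeze_zero_norm ?_ hgt
    · intro ρ
      rw [Real.norm_eq_abs, abs_mul, abs_mul, show |(1/2:ℝ)| = 1/2 by norm_num, mul_assoc]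
      have h2 := mul_le_mul_of_nonneg_right (Real.abs_cos_le_one (ρ*a))
        (abs_nonneg (∫ t in (0:ℝ)..a, q t * Real.cos (2*ρ*t)))
      rw [one_mul] at h2
      nlinarith
  have t2 : Tendsto (fun ρ : ℝ => (1/2*Real.sin (ρ*a)) * (∫ t in (0:ℝ)..a, q t * Real.sin (2*ρ*t)))
      atTop (nhds 0) := by
    have hgt : Tendsto (fun ρ : ℝ => 1/2 * |∫ t in (0:ℝ)..a, q t * Real.sin (2*ρ*t)|)
        atTop (nhds 0) := by simpa using (hIs.abs).const_mul (1/2:ℝ)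
    refine squeeze_zero_norm ?_ hgt
    · intro ρ
      rw [Real.norm_eq_abs, abs_mul, abs_mul, show |(1/2:ℝ)| = 1/2 by norm_num, mul_assoc]
      have h2 := mul_le_mul_of_nonneg_right (Real.abs_sin_le_one (ρ*a))
        (abs_nonneg (∫ t in (0:ℝ)..a, q t * Real.sin (2*ρ*t)))
      rw [one_mul] at h2
      nlinarith
  have t3 : Tendsto (fun ρ : ℝ => ∫ t in (0:ℝ)..a, Real.cos (ρ*(a-t)) * (q t * (C ρ t - Real.cos (ρ*t))))
      atTop (nhds 0) := by
    have hgt : Tendsto (fun ρ : ℝ => Q * (2*Q) / ρ) atTop (nhds 0) :=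
      Filter.Tendsto.div_atTop tendsto_const_nhds tendsto_id
    refine squeeze_zero_norm' ?_ hgt
    · filter_upwards [eventually_ge_atTop R] with ρ hρR
      have hρ : (0:ℝ) < ρ := by rw [hRdef] at hρR; linarith
      have int1 : IntervalIntegrable (fun t => Real.cos (ρ*(a-t)) * (q t * (C ρ t - Real.cos (ρ*t))))
          MeasureTheory.volume 0 a :=
        hqCI _ _ (by fun_prop) ((hCcont ρ hρ).sub (by fun_prop : Continuous fun t => Real.cos (ρ*t)).continuousOn) a haI
      have hbd := key_bound ha haI hq int1 (fun t => Real.abs_cos_le_one _)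
        (hdiff ρ hρR) (by positivity)
      rw [Real.norm_eq_abs]
      calc |∫ t in (0:ℝ)..a, Real.cos (ρ*(a-t)) * (q t * (C ρ t - Real.cos (ρ*t)))|
          ≤ Q * (2*Q/ρ) := hbd
        _ = Q * (2*Q) / ρ := by ring
  have hmain := (t1.add t2).add t3
  rw [add_zero, add_zero] at hmain
  refine Filter.Tendsto.congr' ?_ hmain
  filter_upwards [eventually_ge_atTop R] with ρ hρR
  exact (heqMain ρ hρR).symm
end

section
/- Let $a > 0$ and let $q$ be a Lebesgue integrable function on $[0,a]$. For each $\rho > 0$ let $S_\rho : [0,a] \to \mathbb{R}$ be a continuous function satisfying $S_\rho(x) = \frac{\sin(\rho x)}{\rho} + \frac{1}{\rho}\int_0^x \sin(\rho(x-t))\, q(t)\, S_\rho(t)\, dt$ for all $x \in [0,a]$. Set $K = \frac{1}{2}\int_0^a q(t)\, dt$. Then $\rho^2\Big( S_\rho(a) - \frac{\sin(\rho a)}{\rho} + \frac{K}{\rho^2}\cos(\rho a) \Big) \to 0$ as $\rho \to \infty$; that is, $S_\rho(a) = \rho^{-1}\sin(\rho a) - \rho^{-2} K \cos(\rho a) +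 o(\rho^{-2})$. -/
open MeasureTheory Filter Real

-- helper: interval integrability of f * q * g with f, g continuousOn
lemma II_mul {x : ℝ} (hx : 0 ≤ x) {q : ℝ → ℝ} (hq : MeasureTheory.IntegrableOn q (Set.Icc 0 x))
    {f g : ℝ → ℝ} (hf : ContinuousOn f (Set.Icc 0 x)) (hg : ContinuousOn g (Set.Icc 0 x)) :
    IntervalIntegrable (fun t => f t * q t * g t) MeasureTheory.volume 0 x := by
  rw [intervalIntegrable_iff_integrableOn_Icc_of_le hx]
  exact (hq.continuousOn_mul hf isCompact_Icc).mul_continuousOn hg isCompact_Icc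

lemma int_bound {x c : ℝ} (hx0 : 0 ≤ x) {q u f : ℝ → ℝ}
    (hqa : IntervalIntegrable (fun t => |q t|) MeasureTheory.volume 0 x)
    (hu : ∀ t, |u t| ≤ 1) (hc : 0 ≤ c) (hf : ∀ t ∈ Set.Icc 0 x, |f t| ≤ c) :
    |∫ t in (0:ℝ)..x, u t * q t * f t| ≤ (∫ t in (0:ℝ)..x, |q t|) * c := by
  have hae : ∀ᵐ t ∂(MeasureTheory.volume.restrict (Set.uIoc 0 x)),
      ‖u t * q t * f t‖ ≤ |q t| * c := by
    filter_upwards [MeasureTheory.ae_restrict_mem measurableSet_uIoc] with t ht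
    rw [Set.uIoc_of_le hx0] at ht
    have ht' : t ∈ Set.Icc 0 x := ⟨le_of_lt ht.1, ht.2⟩
    rw [Real.norm_eq_abs, abs_mul, abs_mul]
    have h1 : |u t| * |q t| ≤ 1 * |q t| := mul_le_mul_of_nonneg_right (hu t) (abs_nonneg _)
    calc |u t| * |q t| * |f t| ≤ 1 * |q t| * c := by
          exact mul_le_mul h1 (hf t ht') (abs_nonneg _) (by positivity)
      _ = |q t| * c := by ring
  have h := intervalIntegral.norm_integral_le_abs_of_norm_le hae (hqa.mul_const c)
  rw [intervalIntegral.integral_mul_const] at h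
  rwa [abs_of_nonneg (mul_nonneg
    (intervalIntegral.integral_nonneg hx0 fun t _ => abs_nonneg _) hc)] at h

lemma sin_mul_sin' (u v : ℝ) :
    Real.sin u * Real.sin v = (Real.cos (u - v) - Real.cos (u + v)) / 2 := by
  rw [Real.cos_sub, Real.cos_add]; ring

lemma rl_interval {a : ℝ} (ha : 0 ≤ a) {q : ℝ → ℝ}
    (hq : MeasureTheory.IntegrableOn q (Set.Icc 0 a))
    (hrl : ∀ g : ℝ → ℝ, Integrable g →
      Tendsto (fun ξ : ℝ => ∫ t : ℝ, g t * Real.cos (ξ * t)) atTop (nhds 0) ∧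
      Tendsto (fun ξ : ℝ => ∫ t : ℝ, g t * Real.sin (ξ * t)) atTop (nhds 0)) :
    Tendsto (fun ξ : ℝ => ∫ t in (0:ℝ)..a, q t * Real.cos (ξ * t)) atTop (nhds 0) ∧
    Tendsto (fun ξ : ℝ => ∫ t in (0:ℝ)..a, q t * Real.sin (ξ * t)) atTop (nhds 0) := by
  set g : ℝ → ℝ := (Set.Ioc 0 a).indicator q with hg
  have hgint : Integrable g :=
    (hq.mono_set Set.Ioc_subset_Icc_self).integrable_indicator measurableSet_Ioc
  have hkey : ∀ (c : ℝ → ℝ) (ξ : ℝ), (∫ t : ℝ, g t * c (ξ * t))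
      = ∫ t in (0:ℝ)..a, q t * c (ξ * t) := by
    intro c ξ
    rw [intervalIntegral.integral_of_le ha, ← MeasureTheory.integral_indicator measurableSet_Ioc]
    congr 1
    funext t
    by_cases ht : t ∈ Set.Ioc 0 a <;> simp [hg, Set.indicator_apply, ht]
  obtain ⟨h1, h2⟩ := hrl g hgint
  constructor
  · exact ((tendsto_congr fun ξ => hkey Real.cos ξ).1 h1)
  · exact ((tendsto_congr fun ξ => hkey Real.sin ξ).1 h2)

lemma II_qc {a : ℝ} (ha : 0 ≤ a) {q : ℝ → ℝ}
    (hq : MeasureTheory.IntegrableOn q (Set.Icc 0 a)) {c : ℝ → ℝ} (hc : Continuous c) :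
    IntervalIntegrable (fun t => q t * c t) MeasureTheory.volume 0 a := by
  rw [intervalIntegrable_iff_integrableOn_Icc_of_le ha]
  exact hq.mul_continuousOn hc.continuousOn isCompact_Icc

lemma hG_lemma {a : ℝ} (ha : 0 ≤ a) {q : ℝ → ℝ}
    (hq : MeasureTheory.IntegrableOn q (Set.Icc 0 a))
    (hC : Tendsto (fun ξ : ℝ => ∫ t in (0:ℝ)..a, q t * Real.cos (ξ * t)) atTop (nhds 0))
    (hSn : Tendsto (fun ξ : ℝ => ∫ t in (0:ℝ)..a, q t * Real.sin (ξ * t)) atTop (nhds 0)) :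
    Tendsto (fun ρ : ℝ => (1/2) * ∫ t in (0:ℝ)..a, Real.cos (ρ*(a-2*t)) * q t)
      atTop (nhds 0) := by
  have h2ρ : Tendsto (fun ρ : ℝ => 2*ρ) atTop atTop :=
    tendsto_id.const_mul_atTop two_pos
  have hexp : ∀ ρ : ℝ, (∫ t in (0:ℝ)..a, Real.cos (ρ*(a-2*t)) * q t)
      = Real.cos (ρ*a) * (∫ t in (0:ℝ)..a, q t * Real.cos ((2*ρ) * t))
        + Real.sin (ρ*a) * (∫ t in (0:ℝ)..a, q t * Real.sin ((2*ρ) * t)) := by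
    intro ρ
    rw [← intervalIntegral.integral_const_mul, ← intervalIntegral.integral_const_mul,
      ← intervalIntegral.integral_add
        ((II_qc ha hq (by continuity)).const_mul _)
        ((II_qc ha hq (by continuity)).const_mul _)]
    apply intervalIntegral.integral_congr
    intro t _
    show Real.cos (ρ*(a-2*t)) * q t = _
    rw [show ρ*(a-2*t) = ρ*a - (2*ρ)*t by ring, Real.cos_sub]
    ring
  have hT1 : Tendsto (fun ρ : ℝ =>
      Real.cos (ρ*a) * ∫ t in (0:ℝ)..a, q t * Real.cos ((2*ρ) * t)) atTop (nhds 0) := by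
    apply squeeze_zero_norm (a := fun ρ => |∫ t in (0:ℝ)..a, q t * Real.cos ((2*ρ) * t)|)
    · intro ρ
      rw [Real.norm_eq_abs, abs_mul]
      exact mul_le_of_le_one_left (abs_nonneg _) (Real.abs_cos_le_one _)
    · have := (hC.comp h2ρ).abs
      simpa using this
  have hT2 : Tendsto (fun ρ : ℝ =>
      Real.sin (ρ*a) * ∫ t in (0:ℝ)..a, q t * Real.sin ((2*ρ) * t)) atTop (nhds 0) := by
    apply squeeze_zero_norm (a := fun ρ => |∫ t in (0:ℝ)..a, q t * Real.sin ((2*ρ) * t)|)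
    · intro ρ
      rw [Real.norm_eq_abs, abs_mul]
      exact mul_le_of_le_one_left (abs_nonneg _) (Real.abs_sin_le_one _)
    · have := (hSn.comp h2ρ).abs
      simpa using this
  have := (hT1.add hT2).const_mul (1/2 : ℝ)
  norm_num at this
  exact (tendsto_congr fun ρ => by rw [hexp ρ]).2 this

lemma fourierChar_smul_re (θ : ℝ) (r : ℝ) :
    (Real.fourierChar (-θ) • ((r:ℂ))).re = r * Real.cos (2*π*θ) := by
  rw [Circle.smul_def, Real.fourierChar_apply, smul_eq_mul, Complex.mul_re,
    Complex.exp_ofReal_mul_I_re, Complex.exp_ofReal_mul_I_im]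
  simp [Real.cos_neg, mul_comm, mul_assoc, mul_left_comm]

lemma fourierChar_smul_im (θ : ℝ) (r : ℝ) :
    (Real.fourierChar (-θ) • ((r:ℂ))).im = -(r * Real.sin (2*π*θ)) := by
  rw [Circle.smul_def, Real.fourierChar_apply, smul_eq_mul, Complex.mul_im,
    Complex.exp_ofReal_mul_I_re, Complex.exp_ofReal_mul_I_im]
  simp [Real.sin_neg, mul_comm, mul_assoc, mul_left_comm]

lemma rl_cos_sin {g : ℝ → ℝ} (hg : Integrable g) :
    Tendsto (fun ξ : ℝ => ∫ t : ℝ, g t * Real.cos (ξ * t)) atTop (nhds 0) ∧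
    Tendsto (fun ξ : ℝ => ∫ t : ℝ, g t * Real.sin (ξ * t)) atTop (nhds 0) := by
  have hF : Tendsto (fun w : ℝ => ∫ v : ℝ, Real.fourierChar (-(v * w)) • ((g v : ℂ)))
      atTop (nhds 0) := by
    have h := Real.tendsto_integral_exp_smul_cocompact (fun v : ℝ => (g v : ℂ))
    refine h.mono_left ?_
    rw [cocompact_eq_atBot_atTop]; exact le_sup_right
  have hint : ∀ w : ℝ, Integrable (fun v : ℝ => Real.fourierChar (-(v * w)) • ((g v : ℂ))) :=
    fun w => by
      have h := (Real.fourierIntegral_convergent_iff (μ := volume) (f := fun v => (g v : ℂ)) w).2 hg.ofReal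
      have e : (fun v : ℝ => Real.fourierChar (-(v * w)) • ((g v : ℂ)))
          = fun v : ℝ => Real.fourierChar (-inner ℝ v w) • ((g v : ℂ)) := by
        funext v; rw [real_inner_comm]; rfl
      rw [e]; exact h
  have hre : ∀ w : ℝ, (∫ v : ℝ, Real.fourierChar (-(v * w)) • ((g v : ℂ))).re
      = ∫ v : ℝ, g v * Real.cos ((2*π*w) * v) := by
    intro w
    rw [show (∫ v : ℝ, Real.fourierChar (-(v * w)) • ((g v : ℂ))).re = RCLike.re (∫ v : ℝ, Real.fourierChar (-(v * w)) • ((g v : ℂ))) from rfl, ← integral_re (hint w)]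
    simp only [RCLike.re_to_complex]
    refine integral_congr_ae (Eventually.of_forall fun v => ?_)
    show (Real.fourierChar (-(v*w)) • ((g v : ℂ))).re = _
    rw [fourierChar_smul_re]
    ring_nf
  have him : ∀ w : ℝ, (∫ v : ℝ, Real.fourierChar (-(v * w)) • ((g v : ℂ))).im
      = -∫ v : ℝ, g v * Real.sin ((2*π*w) * v) := by
    intro w
    rw [show (∫ v : ℝ, Real.fourierChar (-(v * w)) • ((g v : ℂ))).im = RCLike.im (∫ v : ℝ, Real.fourierChar (-(v * w)) • ((g v : ℂ))) from rfl, ← integral_im (hint w), ← integral_neg]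
    simp only [RCLike.im_to_complex]
    refine integral_congr_ae (Eventually.of_forall fun v => ?_)
    show (Real.fourierChar (-(v*w)) • ((g v : ℂ))).im = _
    rw [fourierChar_smul_im]
    ring_nf
  have hcomp : Tendsto (fun ξ : ℝ => ξ / (2*π)) atTop atTop :=
    tendsto_id.atTop_div_const (by positivity)
  constructor
  · have h1 : Tendsto (fun w : ℝ => ∫ v : ℝ, g v * Real.cos ((2*π*w) * v)) atTop (nhds 0) := by
      have := (Complex.continuous_re.tendsto 0).comp hF
      simp only [Complex.zero_re] at this
      exact (tendsto_congr fun w => (hre w).symm).2 this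
    have := h1.comp hcomp
    refine this.congr fun ξ => ?_
    simp only [Function.comp]
    congr 1
    field_simp
  · have h1 : Tendsto (fun w : ℝ => ∫ v : ℝ, g v * Real.sin ((2*π*w) * v)) atTop (nhds 0) := by
      have := ((Complex.continuous_im.tendsto 0).comp hF).neg
      simp only [Function.comp, him] at this
      simpa using this
    have := h1.comp hcomp
    refine this.congr fun ξ => ?_
    simp only [Function.comp]
    congr 1
    field_simp

open Real Filter

/-- Asymptotics of the solution `S_ρ` of the Volterra equation associated with
`-y'' + q y = ρ² y`, `y(0)=0`, `y'(0)=1`: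
`S_ρ(a) = ρ⁻¹ sin(ρ a) - ρ⁻² K cos(ρ a) + o(ρ⁻²)` as `ρ → ∞`,
where `K = (1/2) ∫₀ᵃ q`. -/
theorem sine_solution_asymptotics
    (a : ℝ) (ha : 0 < a) (q : ℝ → ℝ)
    (hq : MeasureTheory.IntegrableOn q (Set.Icc 0 a))
    (S : ℝ → ℝ → ℝ)
    (hScont : ∀ ρ : ℝ, 0 < ρ → ContinuousOn (S ρ) (Set.Icc 0 a))
    (hS : ∀ ρ : ℝ, 0 < ρ → ∀ x ∈ Set.Icc (0 : ℝ) a,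
      S ρ x = Real.sin (ρ * x) / ρ +
        (1 / ρ) * ∫ t in (0 : ℝ)..x, Real.sin (ρ * (x - t)) * q t * S ρ t)
    (K : ℝ) (hK : K = (1 / 2) * ∫ t in (0 : ℝ)..a, q t) :
    Tendsto
      (fun ρ : ℝ =>
        ρ ^ 2 * (S ρ a - Real.sin (ρ * a) / ρ + (K / ρ ^ 2) * Real.cos (ρ * a)))
      atTop (nhds 0) := by
  set Q : ℝ := ∫ t in (0:ℝ)..a, |q t| with hQdef
  have hQ0 : (0:ℝ) ≤ Q :=
    intervalIntegral.integral_nonneg ha.le fun t _ => abs_nonneg _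
  have hqabs : MeasureTheory.IntegrableOn (fun t => |q t|) (Set.Icc 0 a) := hq.abs
  have hqaII : ∀ x ∈ Set.Icc (0:ℝ) a,
      IntervalIntegrable (fun t => |q t|) MeasureTheory.volume 0 x := fun x hx =>
    (intervalIntegrable_iff_integrableOn_Icc_of_le hx.1).2
      (hqabs.mono_set (Set.Icc_subset_Icc le_rfl hx.2))
  have haI : a ∈ Set.Icc (0:ℝ) a := ⟨ha.le, le_rfl⟩
  have hQmono : ∀ x ∈ Set.Icc (0:ℝ) a, (∫ t in (0:ℝ)..x, |q t|) ≤ Q := by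
    intro x hx
    have h2 : IntervalIntegrable (fun t => |q t|) MeasureTheory.volume x a :=
      (intervalIntegrable_iff_integrableOn_Icc_of_le hx.2).2
        (hqabs.mono_set (Set.Icc_subset_Icc hx.1 le_rfl))
    have hadd := intervalIntegral.integral_add_adjacent_intervals (hqaII x hx) h2
    have h3 : (0:ℝ) ≤ ∫ t in x..a, |q t| :=
      intervalIntegral.integral_nonneg hx.2 fun t _ => abs_nonneg _
    rw [hQdef]; linarith
  -- the oscillatory part
  set G : ℝ → ℝ := fun ρ => (1/2) * ∫ t in (0:ℝ)..a, Real.cos (ρ*(a-2*t)) * q t with hGdef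
  -- key quantitative estimate
  have key : ∀ ρ : ℝ, max 1 (2*Q) ≤ ρ →
      |ρ ^ 2 * (S ρ a - Real.sin (ρ * a) / ρ + (K / ρ ^ 2) * Real.cos (ρ * a)) - G ρ|
        ≤ 2*Q^2/ρ := by
    intro ρ hρ
    have hρ1 : (1:ℝ) ≤ ρ := le_trans (le_max_left _ _) hρ
    have hρQ : 2*Q ≤ ρ := le_trans (le_max_right _ _) hρ
    have hρ0 : (0:ℝ) < ρ := lt_of_lt_of_le one_pos hρ1
    have hcS : ContinuousOn (S ρ) (Set.Icc 0 a) := hScont ρ hρ0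
    -- maximum of |S ρ| on [0,a]
    obtain ⟨z, hzmem, hzmax⟩ := isCompact_Icc.exists_isMaxOn
      (Set.nonempty_Icc.mpr ha.le) hcS.abs
    have hzmax' : ∀ y ∈ Set.Icc (0:ℝ) a, |S ρ y| ≤ |S ρ z| := fun y hy => hzmax hy
    -- a priori estimate
    have hest : ∀ x ∈ Set.Icc (0:ℝ) a,
        |S ρ x| ≤ 1/ρ + (1/ρ) * (Q * |S ρ z|) := by
      intro x hx
      rw [hS ρ hρ0 x hx]
      have hI : |∫ t in (0:ℝ)..x, Real.sin (ρ*(x-t)) * q t * S ρ t|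
          ≤ (∫ t in (0:ℝ)..x, |q t|) * |S ρ z| :=
        int_bound hx.1 (hqaII x hx) (fun t => Real.abs_sin_le_one _) (abs_nonneg _)
          (fun t ht => hzmax' t (Set.Icc_subset_Icc le_rfl hx.2 ht))
      have hI' : |∫ t in (0:ℝ)..x, Real.sin (ρ*(x-t)) * q t * S ρ t|
          ≤ Q * |S ρ z| :=
        hI.trans (mul_le_mul_of_nonneg_right (hQmono x hx) (abs_nonneg _))
      calc |Real.sin (ρ*x)/ρ + (1/ρ) * ∫ t in (0:ℝ)..x, Real.sin (ρ*(x-t)) * q t * S ρ t|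
          ≤ |Real.sin (ρ*x)/ρ| +
            |(1/ρ) * ∫ t in (0:ℝ)..x, Real.sin (ρ*(x-t)) * q t * S ρ t| := abs_add_le _ _
        _ ≤ 1/ρ + (1/ρ) * (Q * |S ρ z|) := by
            gcongr ?_ + ?_
            · rw [abs_div, abs_of_pos hρ0]
              gcongr
              exact Real.abs_sin_le_one _
            · rw [abs_mul, abs_of_pos (by positivity : (0:ℝ) < 1/ρ)]
              exact mul_le_mul_of_nonneg_left hI' (by positivity)
    -- bound at maximum point
    have hBz : |S ρ z| ≤ 2/ρ := by
      have h := hest z hzmem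
      have h2 : ρ * |S ρ z| ≤ ρ * (1/ρ + (1/ρ) * (Q * |S ρ z|)) :=
        mul_le_mul_of_nonneg_left h hρ0.le
      have h3 : ρ * (1/ρ + (1/ρ) * (Q * |S ρ z|)) = 1 + Q * |S ρ z| := by
        field_simp
      rw [h3] at h2
      have h4 : Q * |S ρ z| ≤ (ρ/2) * |S ρ z| :=
        mul_le_mul_of_nonneg_right (by linarith) (abs_nonneg _)
      rw [le_div_iff₀ hρ0]
      linarith
    have hB : ∀ x ∈ Set.Icc (0:ℝ) a, |S ρ x| ≤ 2/ρ := fun x hx =>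
      (hzmax' x hx).trans hBz
    -- error estimate for S - sin/ρ
    have hE : ∀ x ∈ Set.Icc (0:ℝ) a, |S ρ x - Real.sin (ρ*x)/ρ| ≤ 2*Q/ρ^2 := by
      intro x hx
      have heq : S ρ x - Real.sin (ρ*x)/ρ
          = (1/ρ) * ∫ t in (0:ℝ)..x, Real.sin (ρ*(x-t)) * q t * S ρ t := by
        rw [hS ρ hρ0 x hx]; ring
      rw [heq, abs_mul, abs_of_pos (by positivity : (0:ℝ) < 1/ρ)]
      have hI : |∫ t in (0:ℝ)..x, Real.sin (ρ*(x-t)) * q t * S ρ t|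
          ≤ (∫ t in (0:ℝ)..x, |q t|) * (2/ρ) :=
        int_bound hx.1 (hqaII x hx) (fun t => Real.abs_sin_le_one _) (by positivity)
          (fun t ht => hB t (Set.Icc_subset_Icc le_rfl hx.2 ht))
      have hI' : |∫ t in (0:ℝ)..x, Real.sin (ρ*(x-t)) * q t * S ρ t| ≤ Q * (2/ρ) :=
        hI.trans (mul_le_mul_of_nonneg_right (hQmono x hx) (by positivity))
      calc (1/ρ) * |∫ t in (0:ℝ)..x, Real.sin (ρ*(x-t)) * q t * S ρ t|
          ≤ (1/ρ) * (Q * (2/ρ)) := mul_le_mul_of_nonneg_left hI' (by positivity)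
        _ = 2*Q/ρ^2 := by field_simp
    -- integrability of the pieces
    have hII1 : IntervalIntegrable
        (fun t => Real.sin (ρ*(a-t)) * q t * (Real.sin (ρ*t)/ρ))
        MeasureTheory.volume 0 a :=
      II_mul ha.le hq (by fun_prop) (by fun_prop)
    have hII2 : IntervalIntegrable
        (fun t => Real.sin (ρ*(a-t)) * q t * (S ρ t - Real.sin (ρ*t)/ρ))
        MeasureTheory.volume 0 a :=
      II_mul ha.le hq (by fun_prop) (hcS.sub (by fun_prop))
    have hIIcos : IntervalIntegrable (fun t => Real.cos (ρ*(a-2*t)) * q t)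
        MeasureTheory.volume 0 a := by
      rw [intervalIntegrable_iff_integrableOn_Icc_of_le ha.le]
      exact hq.continuousOn_mul (by fun_prop) isCompact_Icc
    have hqInt : IntervalIntegrable q MeasureTheory.volume 0 a :=
      (intervalIntegrable_iff_integrableOn_Icc_of_le ha.le).2 hq
    -- the main algebraic identity
    have step1 : ρ ^ 2 * (S ρ a - Real.sin (ρ * a) / ρ + (K / ρ ^ 2) * Real.cos (ρ * a))
        = ρ * (∫ t in (0:ℝ)..a, Real.sin (ρ*(a-t)) * q t * S ρ t) + K * Real.cos (ρ*a) := by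
      rw [hS ρ hρ0 a haI]
      field_simp
      ring
    have step2 : (∫ t in (0:ℝ)..a, Real.sin (ρ*(a-t)) * q t * S ρ t)
        = (∫ t in (0:ℝ)..a, Real.sin (ρ*(a-t)) * q t * (Real.sin (ρ*t)/ρ))
          + ∫ t in (0:ℝ)..a, Real.sin (ρ*(a-t)) * q t * (S ρ t - Real.sin (ρ*t)/ρ) := by
      rw [← intervalIntegral.integral_add hII1 hII2]
      apply intervalIntegral.integral_congr
      intro t _
      ring
    have step3 : ρ * (∫ t in (0:ℝ)..a, Real.sin (ρ*(a-t)) * q t * (Real.sin (ρ*t)/ρ))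
        = G ρ - K * Real.cos (ρ*a) := by
      rw [← intervalIntegral.integral_const_mul]
      have hpt : ∀ t, ρ * (Real.sin (ρ*(a-t)) * q t * (Real.sin (ρ*t)/ρ))
          = (1/2) * (Real.cos (ρ*(a-2*t)) * q t) - (Real.cos (ρ*a)/2) * q t := by
        intro t
        have h := sin_mul_sin' (ρ*(a-t)) (ρ*t)
        rw [show ρ*(a-t) - ρ*t = ρ*(a-2*t) by ring, show ρ*(a-t) + ρ*t = ρ*a by ring] at h
        have h0 : ρ * (Real.sin (ρ*(a-t)) * q t * (Real.sin (ρ*t)/ρ))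
            = Real.sin (ρ*(a-t)) * Real.sin (ρ*t) * q t := by
          field_simp
        rw [h0, h]; ring
      rw [intervalIntegral.integral_congr (g :=
        fun t => (1/2) * (Real.cos (ρ*(a-2*t)) * q t) - (Real.cos (ρ*a)/2) * q t)
        (fun t _ => hpt t)]
      rw [intervalIntegral.integral_sub (hIIcos.const_mul _) (hqInt.const_mul _),
        intervalIntegral.integral_const_mul, intervalIntegral.integral_const_mul, hGdef, hK]
      ring
    -- remainder bound
    have hI2 : |∫ t in (0:ℝ)..a, Real.sin (ρ*(a-t)) * q t * (S ρ t - Real.sin (ρ*t)/ρ)|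
        ≤ Q * (2*Q/ρ^2) :=
      int_bound ha.le (hqaII a haI) (fun t => Real.abs_sin_le_one _) (by positivity) hE
    have hsplit : ρ ^ 2 * (S ρ a - Real.sin (ρ * a) / ρ + (K / ρ ^ 2) * Real.cos (ρ * a)) - G ρ
        = ρ * ∫ t in (0:ℝ)..a, Real.sin (ρ*(a-t)) * q t * (S ρ t - Real.sin (ρ*t)/ρ) := by
      rw [step1, step2, mul_add, step3]
      ring
    rw [hsplit, abs_mul, abs_of_pos hρ0]
    calc ρ * |∫ t in (0:ℝ)..a, Real.sin (ρ*(a-t)) * q t * (S ρ t - Real.sin (ρ*t)/ρ)|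
        ≤ ρ * (Q * (2*Q/ρ^2)) := mul_le_mul_of_nonneg_left hI2 hρ0.le
      _ = 2*Q^2/ρ := by field_simp
  -- assembling the limit
  have hCS := rl_interval ha.le hq (fun g hg => rl_cos_sin hg)
  have hG : Tendsto G atTop (nhds 0) := hG_lemma ha.le hq hCS.1 hCS.2
  have hbound : Tendsto (fun ρ : ℝ => 2*Q^2/ρ) atTop (nhds 0) :=
    tendsto_const_nhds.div_atTop tendsto_id
  have hrem : Tendsto (fun ρ : ℝ =>
      ρ ^ 2 * (S ρ a - Real.sin (ρ * a) / ρ + (K / ρ ^ 2) * Real.cos (ρ * a)) - G ρ)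
      atTop (nhds 0) := by
    apply squeeze_zero_norm' _ hbound
    filter_upwards [eventually_ge_atTop (max 1 (2*Q))] with ρ hρ
    exact key ρ hρ
  have := hG.add hrem
  norm_num at this
  exact (tendsto_congr fun ρ => by ring).2 this
end

section
/- Let $a > 0$ and let $q$ be a Lebesgue integrable function on $[0,a]$. For each $\rho > 0$ let $S_\rho : [0,a] \to \mathbb{R}$ be a continuous function satisfying $S_\rho(x) = \frac{\sin(\rho x)}{\rho} + \frac{1}{\rho}\int_0^x \sin(\rho(x-t))\, q(t)\, S_\rho(t)\, dt$ for all $x \in [0,a]$, and define $T_\rho(x) = \cos(\rho x) + \int_0^x \cos(\rho(x-t))\, q(t)\, S_\rho(t)\, dt$ (which equals the derivative $S_\rho'(x)$). Set $K = \frac{1}{2}\int_0^a q(t)\, dt$. Then $\rho\Big( T_\rho(a) - \cos(\rho a) - \frac{K}{\rho}\sin(\rho a) \Big) \to 0$ as $\rho \to \infty$; that is, $S_\rho'(a) = \cos(\rho a) + \rho^{-1} K \sin(\rho a) + o(\rho^{-1})$. -/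
open FourierTransform Real Filter MeasureTheory intervalIntegral Set Complex

lemma rl_complex (a : ℝ) (ha : 0 ≤ a) (q : ℝ → ℝ)
    (hq : MeasureTheory.IntegrableOn q (Set.Icc 0 a)) :
    Tendsto (fun c : ℝ => ∫ t in Set.Ioc (0:ℝ) a, Complex.exp (↑(c * t) * Complex.I) * (q t : ℂ))
      atTop (nhds 0) := by
  set g : ℝ → ℂ := (Set.Ioc (0:ℝ) a).indicator (fun t => (q t : ℂ)) with hg_def
  have hqI : MeasureTheory.IntegrableOn (fun t => (q t : ℂ)) (Set.Ioc 0 a) :=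
    ((hq.mono_set Set.Ioc_subset_Icc_self).ofReal)
  have hg : MeasureTheory.Integrable g :=
    (MeasureTheory.integrable_indicator_iff measurableSet_Ioc).2 hqI
  have h1 : Tendsto (𝓕 g) (Filter.cocompact ℝ) (nhds 0) := Real.zero_at_infty_fourier g
  have h2 : Tendsto (𝓕 g) atBot (nhds 0) := h1.mono_left (by rw [cocompact_eq_atBot_atTop]; exact le_sup_left)
  have h3 : Tendsto (fun c : ℝ => -(c / (2 * π))) atTop atBot := by
    apply tendsto_neg_atBot_iff.2
    exact Tendsto.atTop_div_const (by positivity) tendsto_id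
  have h4 : Tendsto (fun c : ℝ => 𝓕 g (-(c / (2 * π)))) atTop (nhds 0) := h2.comp h3
  refine h4.congr (fun c => ?_)
  rw [Real.fourier_real_eq_integral_exp_smul]
  rw [← MeasureTheory.integral_indicator measurableSet_Ioc]
  congr 1
  ext v
  by_cases hv : v ∈ Set.Ioc (0:ℝ) a
  · simp only [hv, if_true, hg_def, Set.indicator_of_mem hv, smul_eq_mul]
    congr 2
    congr 1
    rw [Complex.ofReal_inj]
    have hpi : (π:ℝ) ≠ 0 := Real.pi_ne_zero
    field_simp
  · simp [hg_def, Set.indicator_of_notMem hv, hv]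

lemma expI_integrable (a : ℝ) (q : ℝ → ℝ)
    (hq : MeasureTheory.IntegrableOn q (Set.Icc 0 a)) (c : ℝ) :
    MeasureTheory.IntegrableOn (fun t => Complex.exp (↑(c * t) * Complex.I) * (q t : ℂ))
      (Set.Ioc 0 a) := by
  refine MeasureTheory.Integrable.bdd_mul ((hq.mono_set Set.Ioc_subset_Icc_self).ofReal) ?_ (c := 1) (Filter.Eventually.of_forall fun x => ?_)
  · exact (Complex.continuous_exp.comp (by continuity)).aestronglyMeasurable
  · rw [Complex.norm_exp_ofReal_mul_I]

lemma rl_cos (a : ℝ) (ha : 0 ≤ a) (q : ℝ → ℝ)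
    (hq : MeasureTheory.IntegrableOn q (Set.Icc 0 a)) :
    Tendsto (fun c : ℝ => ∫ t in (0:ℝ)..a, Real.cos (c * t) * q t) atTop (nhds 0) := by
  have h := (Complex.continuous_re.tendsto 0).comp (rl_complex a ha q hq)
  simp only [Complex.zero_re] at h
  refine h.congr (fun c => ?_)
  rw [intervalIntegral.integral_of_le ha, MeasureTheory.integral_Ioc_eq_integral_Ioo]
  rw [Function.comp_apply, ← RCLike.re_to_complex, ← _root_.integral_re (expI_integrable a q hq c),
    MeasureTheory.integral_Ioc_eq_integral_Ioo]
  congr 1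
  ext t
  simp [Complex.mul_re]
  left; rw [← Complex.ofReal_mul, Complex.exp_ofReal_mul_I_re]

lemma rl_sin (a : ℝ) (ha : 0 ≤ a) (q : ℝ → ℝ)
    (hq : MeasureTheory.IntegrableOn q (Set.Icc 0 a)) :
    Tendsto (fun c : ℝ => ∫ t in (0:ℝ)..a, Real.sin (c * t) * q t) atTop (nhds 0) := by
  have h := (Complex.continuous_im.tendsto 0).comp (rl_complex a ha q hq)
  simp only [Complex.zero_im] at h
  refine h.congr (fun c => ?_)
  rw [intervalIntegral.integral_of_le ha, MeasureTheory.integral_Ioc_eq_integral_Ioo]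
  rw [Function.comp_apply, ← RCLike.im_to_complex, ← _root_.integral_im (expI_integrable a q hq c),
    MeasureTheory.integral_Ioc_eq_integral_Ioo]
  congr 1
  ext t
  simp [Complex.mul_im]
  left; rw [← Complex.ofReal_mul, Complex.exp_ofReal_mul_I_im]


/-- Asymptotics of the derivative of the solution `S_ρ` of the Volterra equation
associated with `-y'' + q y = ρ² y`, `y(0)=0`, `y'(0)=1`:
`S_ρ'(a) = cos(ρ a) + ρ⁻¹ K sin(ρ a) + o(ρ⁻¹)` as `ρ → ∞`,
where `K = (1/2) ∫₀ᵃ q` and `T_ρ = S_ρ'` is given by the stated formula. -/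
theorem sine_solution_derivative_asymptotics
    (a : ℝ) (ha : 0 < a) (q : ℝ → ℝ)
    (hq : MeasureTheory.IntegrableOn q (Set.Icc 0 a))
    (S : ℝ → ℝ → ℝ)
    (hScont : ∀ ρ : ℝ, 0 < ρ → ContinuousOn (S ρ) (Set.Icc 0 a))
    (hS : ∀ ρ : ℝ, 0 < ρ → ∀ x ∈ Set.Icc (0 : ℝ) a,
      S ρ x = Real.sin (ρ * x) / ρ +
        (1 / ρ) * ∫ t in (0 : ℝ)..x, Real.sin (ρ * (x - t)) * q t * S ρ t)
    (T : ℝ → ℝ → ℝ)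
    (hT : ∀ ρ : ℝ, 0 < ρ → ∀ x ∈ Set.Icc (0 : ℝ) a,
      T ρ x = Real.cos (ρ * x) +
        ∫ t in (0 : ℝ)..x, Real.cos (ρ * (x - t)) * q t * S ρ t)
    (K : ℝ) (hK : K = (1 / 2) * ∫ t in (0 : ℝ)..a, q t) :
    Tendsto
      (fun ρ : ℝ => ρ * (T ρ a - Real.cos (ρ * a) - (K / ρ) * Real.sin (ρ * a)))
      atTop (nhds 0) := by
  have ha0 : (0:ℝ) ≤ a := ha.le
  set Q : ℝ := ∫ t in (0:ℝ)..a, |q t| with hQdef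
  have hq' : MeasureTheory.IntegrableOn q (Set.Ioc 0 a) := hq.mono_set Set.Ioc_subset_Icc_self
  have hqi : ∀ x ∈ Set.Icc (0:ℝ) a, IntervalIntegrable q MeasureTheory.volume 0 x := by
    intro x hx
    rw [intervalIntegrable_iff_integrableOn_Ioc_of_le hx.1]
    exact hq'.mono_set (Set.Ioc_subset_Ioc le_rfl hx.2)
  have hQ0 : 0 ≤ Q := intervalIntegral.integral_nonneg ha0 (fun t _ => abs_nonneg _)
  have hQx : ∀ x ∈ Set.Icc (0:ℝ) a, (∫ t in (0:ℝ)..x, |q t|) ≤ Q := by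
    intro x hx
    exact intervalIntegral.integral_mono_interval le_rfl hx.1 hx.2
      (Filter.Eventually.of_forall fun t => abs_nonneg _) ((hqi a ⟨ha0, le_rfl⟩).abs)
  -- integrability of (continuous-on-Icc) * q
  have key1 : ∀ (g : ℝ → ℝ), ContinuousOn g (Set.Icc 0 a) → ∀ x ∈ Set.Icc (0:ℝ) a,
      IntervalIntegrable (fun t => g t * q t) MeasureTheory.volume 0 x := by
    intro g hg x hx
    rw [intervalIntegrable_iff_integrableOn_Ioc_of_le hx.1]
    obtain ⟨C, hC⟩ := isCompact_Icc.exists_bound_of_continuousOn hg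
    have h1 : MeasureTheory.IntegrableOn (fun t => g t * q t) (Set.Ioc 0 a) :=
      MeasureTheory.Integrable.bdd_mul hq' ((hg.mono Set.Ioc_subset_Icc_self).aestronglyMeasurable measurableSet_Ioc)
        ((MeasureTheory.ae_restrict_iff' measurableSet_Ioc).2
          (Filter.Eventually.of_forall fun t ht => hC t (Set.Ioc_subset_Icc_self ht)))
    exact h1.mono_set (Set.Ioc_subset_Ioc le_rfl hx.2)
  -- integrability of g₁ * q * g₂ with g₁, g₂ continuous on Icc
  have key2 : ∀ (g₁ g₂ : ℝ → ℝ), ContinuousOn g₁ (Set.Icc 0 a) → ContinuousOn g₂ (Set.Icc 0 a) →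
      ∀ x ∈ Set.Icc (0:ℝ) a,
      IntervalIntegrable (fun t => g₁ t * q t * g₂ t) MeasureTheory.volume 0 x := by
    intro g₁ g₂ hg₁ hg₂ x hx
    have h1 := key1 (fun t => g₁ t * g₂ t) (hg₁.mul hg₂) x hx
    have h2 : (fun t => g₁ t * g₂ t * q t) = fun t => g₁ t * q t * g₂ t := by
      funext t; ring
    rwa [h2] at h1
  -- general bound on integrals
  have bound : ∀ x ∈ Set.Icc (0:ℝ) a, ∀ (f : ℝ → ℝ) (B : ℝ), 0 ≤ B →
      IntervalIntegrable f MeasureTheory.volume 0 x →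
      (∀ t ∈ Set.Icc 0 x, |f t| ≤ |q t| * B) → |∫ t in (0:ℝ)..x, f t| ≤ Q * B := by
    intro x hx f B hB hfi hfb
    calc |∫ t in (0:ℝ)..x, f t| ≤ ∫ t in (0:ℝ)..x, |f t| :=
          intervalIntegral.abs_integral_le_integral_abs hx.1
      _ ≤ ∫ t in (0:ℝ)..x, |q t| * B :=
          intervalIntegral.integral_mono_on hx.1 hfi.abs ((hqi x hx).abs.mul_const B) hfb
      _ = (∫ t in (0:ℝ)..x, |q t|) * B := intervalIntegral.integral_mul_const B _
      _ ≤ Q * B := mul_le_mul_of_nonneg_right (hQx x hx) hB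
  -- a priori bound on S
  have hM : ∀ ρ : ℝ, 0 < ρ → 2 * Q ≤ ρ → ∀ t ∈ Set.Icc (0:ℝ) a, |S ρ t| ≤ 2 / ρ := by
    intro ρ hρ hρQ
    obtain ⟨x₀, hx₀, hmax⟩ := isCompact_Icc.exists_isMaxOn ⟨0, Set.left_mem_Icc.2 ha0⟩
      ((hScont ρ hρ).abs)
    set M := |S ρ x₀| with hMdef
    have hM0 : 0 ≤ M := abs_nonneg _
    have hSb : ∀ t ∈ Set.Icc (0:ℝ) a, |S ρ t| ≤ M := fun t ht => hmax ht
    have hint : IntervalIntegrable (fun t => Real.sin (ρ*(x₀ - t)) * q t * S ρ t)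
        MeasureTheory.volume 0 x₀ :=
      key2 (fun t => Real.sin (ρ*(x₀ - t))) (S ρ)
        ((Real.continuous_sin.comp (continuous_const.mul (continuous_const.sub continuous_id))).continuousOn)
        (hScont ρ hρ) x₀ hx₀
    have h2 : |∫ t in (0:ℝ)..x₀, Real.sin (ρ*(x₀ - t)) * q t * S ρ t| ≤ Q * M := by
      refine bound x₀ hx₀ _ M hM0 hint (fun t ht => ?_)
      have ht' : t ∈ Set.Icc (0:ℝ) a := ⟨ht.1, ht.2.trans hx₀.2⟩
      calc |Real.sin (ρ*(x₀ - t)) * q t * S ρ t|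
          = |Real.sin (ρ*(x₀ - t))| * |q t| * |S ρ t| := by rw [abs_mul, abs_mul]
        _ ≤ 1 * |q t| * M := by
            apply mul_le_mul (mul_le_mul_of_nonneg_right (Real.abs_sin_le_one _) (abs_nonneg _))
              (hSb t ht') (abs_nonneg _)
            positivity
        _ = |q t| * M := by ring
    have h1 : M ≤ 1/ρ + (1/ρ) * (Q * M) := by
      calc M = |Real.sin (ρ * x₀) / ρ +
            (1 / ρ) * ∫ t in (0:ℝ)..x₀, Real.sin (ρ * (x₀ - t)) * q t * S ρ t| := by
              rw [hMdef, hS ρ hρ x₀ hx₀]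
        _ ≤ |Real.sin (ρ * x₀) / ρ| +
            |(1 / ρ) * ∫ t in (0:ℝ)..x₀, Real.sin (ρ * (x₀ - t)) * q t * S ρ t| := abs_add_le _ _
        _ ≤ 1/ρ + (1/ρ) * (Q * M) := by
            apply add_le_add
            · rw [abs_div, abs_of_pos hρ]
              gcongr
              exact Real.abs_sin_le_one _
            · rw [abs_mul, abs_of_pos (by positivity : (0:ℝ) < 1/ρ)]
              exact mul_le_mul_of_nonneg_left h2 (by positivity)
    have h1' : M * ρ ≤ 1 + Q * M := by
      have h3 : ρ * M ≤ ρ * (1/ρ + 1/ρ * (Q * M)) := mul_le_mul_of_nonneg_left h1 hρ.le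
      have h4 : ρ * (1/ρ + 1/ρ * (Q * M)) = 1 + Q * M := by field_simp
      linarith
    intro t ht
    rw [le_div_iff₀ hρ]
    nlinarith [hSb t ht, h1', hM0, hQ0, hρ, mul_nonneg (by linarith : (0:ℝ) ≤ ρ - 2*Q) hM0,
      mul_le_mul_of_nonneg_right (hSb t ht) hρ.le]
  -- remainder bound
  have hRem : ∀ ρ : ℝ, 0 < ρ → 2 * Q ≤ ρ → ∀ t ∈ Set.Icc (0:ℝ) a,
      |ρ * S ρ t - Real.sin (ρ*t)| ≤ Q * (2/ρ) := by
    intro ρ hρ hρQ t ht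
    have e : ρ * S ρ t - Real.sin (ρ*t) = ∫ s in (0:ℝ)..t, Real.sin (ρ*(t-s)) * q s * S ρ s := by
      rw [hS ρ hρ t ht]
      field_simp
      ring
    rw [e]
    refine bound t ht _ (2/ρ) (by positivity)
      (key2 (fun s => Real.sin (ρ*(t-s))) (S ρ)
        ((Real.continuous_sin.comp (continuous_const.mul (continuous_const.sub continuous_id))).continuousOn)
        (hScont ρ hρ) t ht) (fun s hs => ?_)
    have hs' : s ∈ Set.Icc (0:ℝ) a := ⟨hs.1, hs.2.trans ht.2⟩
    calc |Real.sin (ρ*(t-s)) * q s * S ρ s|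
        = |Real.sin (ρ*(t-s))| * |q s| * |S ρ s| := by rw [abs_mul, abs_mul]
      _ ≤ 1 * |q s| * (2/ρ) := by
          apply mul_le_mul (mul_le_mul_of_nonneg_right (Real.abs_sin_le_one _) (abs_nonneg _))
            (hM ρ hρ hρQ s hs') (abs_nonneg _)
          positivity
      _ = |q s| * (2/ρ) := by ring
  set Ic : ℝ → ℝ := fun c => ∫ t in (0:ℝ)..a, Real.cos (c*t) * q t with hIcdef
  set Is : ℝ → ℝ := fun c => ∫ t in (0:ℝ)..a, Real.sin (c*t) * q t with hIsdef
  have hIcos : Tendsto Ic atTop (nhds 0) := rl_cos a ha0 q hq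
  have hIsin : Tendsto Is atTop (nhds 0) := rl_sin a ha0 q hq
  have h2ρ : Tendsto (fun ρ:ℝ => 2*ρ) atTop atTop :=
    Tendsto.const_mul_atTop two_pos tendsto_id
  set G₁ : ℝ → ℝ := fun ρ =>
    ∫ t in (0:ℝ)..a, (Real.cos (ρ*(a-t)) * (ρ * S ρ t - Real.sin (ρ*t))) * q t with hG₁def
  set G₂ : ℝ → ℝ := fun ρ => (-(1/2) * Real.sin (ρ*a)) * Ic (2*ρ) with hG₂def
  set G₃ : ℝ → ℝ := fun ρ => ((1/2) * Real.cos (ρ*a)) * Is (2*ρ) with hG₃def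
  have tG₂ : Tendsto G₂ atTop (nhds 0) := by
    have hlim : Tendsto (fun ρ : ℝ => |Ic (2*ρ)|) atTop (nhds 0) := by
      have h9 := (hIcos.comp h2ρ).abs
      simpa using h9
    apply squeeze_zero_norm (fun ρ => ?_) hlim
    rw [Real.norm_eq_abs, hG₂def]
    have h6 : |(-(1/2) * Real.sin (ρ*a))| ≤ 1 := by
      rw [abs_mul]
      have h7 : |(-(1/2):ℝ)| = 1/2 := by norm_num
      rw [h7]
      nlinarith [Real.abs_sin_le_one (ρ*a), abs_nonneg (Real.sin (ρ*a))]
    calc |(-(1/2) * Real.sin (ρ*a)) * Ic (2*ρ)|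
        = |(-(1/2) * Real.sin (ρ*a))| * |Ic (2*ρ)| := abs_mul _ _
      _ ≤ 1 * |Ic (2*ρ)| := mul_le_mul_of_nonneg_right h6 (abs_nonneg _)
      _ = |Ic (2*ρ)| := one_mul _
  have tG₃ : Tendsto G₃ atTop (nhds 0) := by
    have hlim : Tendsto (fun ρ : ℝ => |Is (2*ρ)|) atTop (nhds 0) := by
      have h9 := (hIsin.comp h2ρ).abs
      simpa using h9
    apply squeeze_zero_norm (fun ρ => ?_) hlim
    rw [Real.norm_eq_abs, hG₃def]
    have h6 : |((1/2) * Real.cos (ρ*a))| ≤ 1 := by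
      rw [abs_mul]
      have h7 : |((1/2):ℝ)| = 1/2 := by norm_num
      rw [h7]
      nlinarith [Real.abs_cos_le_one (ρ*a), abs_nonneg (Real.cos (ρ*a))]
    calc |((1/2) * Real.cos (ρ*a)) * Is (2*ρ)|
        = |((1/2) * Real.cos (ρ*a))| * |Is (2*ρ)| := abs_mul _ _
      _ ≤ 1 * |Is (2*ρ)| := mul_le_mul_of_nonneg_right h6 (abs_nonneg _)
      _ = |Is (2*ρ)| := one_mul _
  have tG₁ : Tendsto G₁ atTop (nhds 0) := by
    have hlim : Tendsto (fun ρ:ℝ => Q * (Q * (2/ρ))) atTop (nhds 0) := by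
      have h8 : Tendsto (fun ρ:ℝ => 2/ρ) atTop (nhds (0:ℝ)) :=
        Tendsto.const_div_atTop tendsto_id 2
      have h9 := (tendsto_const_nhds (x := Q)).mul ((tendsto_const_nhds (x := Q)).mul h8)
      simpa using h9
    apply squeeze_zero_norm' ?_ hlim
    filter_upwards [Filter.eventually_ge_atTop (max 1 (2*Q))] with ρ hρ'
    have hρ : 0 < ρ := lt_of_lt_of_le one_pos ((le_max_left _ _).trans hρ')
    have hρQ : 2*Q ≤ ρ := (le_max_right _ _).trans hρ'
    rw [Real.norm_eq_abs, hG₁def]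
    have hcont : ContinuousOn (fun t => Real.cos (ρ*(a-t)) * (ρ * S ρ t - Real.sin (ρ*t)))
        (Set.Icc 0 a) := by
      apply ContinuousOn.mul
      · exact (Real.continuous_cos.comp
          (continuous_const.mul (continuous_const.sub continuous_id))).continuousOn
      · exact (continuousOn_const.mul (hScont ρ hρ)).sub
          (Real.continuous_sin.comp (continuous_const.mul continuous_id)).continuousOn
    refine bound a ⟨ha0, le_rfl⟩ _ (Q*(2/ρ)) (by positivity)
      (key1 _ hcont a ⟨ha0, le_rfl⟩) (fun t ht => ?_)
    have hr := hRem ρ hρ hρQ t ht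
    have hc := Real.abs_cos_le_one (ρ*(a-t))
    have h10 : |Real.cos (ρ*(a-t)) * (ρ * S ρ t - Real.sin (ρ*t))| ≤ Q*(2/ρ) := by
      rw [abs_mul]
      calc |Real.cos (ρ*(a-t))| * |ρ * S ρ t - Real.sin (ρ*t)|
          ≤ 1 * (Q*(2/ρ)) := mul_le_mul hc hr (abs_nonneg _) one_pos.le
        _ = Q*(2/ρ) := one_mul _
    rw [abs_mul, mul_comm]
    exact mul_le_mul_of_nonneg_left h10 (abs_nonneg _)
  refine Tendsto.congr' ?_ (by simpa using ((tG₁.add tG₂).add tG₃))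
  filter_upwards [Filter.eventually_gt_atTop 0] with ρ hρ
  have haI : a ∈ Set.Icc (0:ℝ) a := ⟨ha0, le_rfl⟩
  have hcont1 : ContinuousOn (fun t => Real.cos (ρ*(a-t)) * (ρ * S ρ t - Real.sin (ρ*t)))
      (Set.Icc 0 a) := by
    apply ContinuousOn.mul
    · exact (Real.continuous_cos.comp
        (continuous_const.mul (continuous_const.sub continuous_id))).continuousOn
    · exact (continuousOn_const.mul (hScont ρ hρ)).sub
        (Real.continuous_sin.comp (continuous_const.mul continuous_id)).continuousOn
  have i1 : IntervalIntegrable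
      (fun t => (Real.cos (ρ*(a-t)) * (ρ * S ρ t - Real.sin (ρ*t))) * q t)
      MeasureTheory.volume 0 a := key1 _ hcont1 a haI
  have i2 : IntervalIntegrable (fun t => ((1/2) * Real.sin (ρ*a)) * q t)
      MeasureTheory.volume 0 a := key1 _ continuousOn_const a haI
  have i3 : IntervalIntegrable (fun t => (-((1/2) * Real.sin (ρ*a) * Real.cos (2*ρ*t))) * q t)
      MeasureTheory.volume 0 a := by
    refine key1 _ ?_ a haI
    exact ((continuousOn_const.mul
      (Real.continuous_cos.comp (continuous_const.mul continuous_id)).continuousOn)).neg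
  have i4 : IntervalIntegrable (fun t => ((1/2) * Real.cos (ρ*a) * Real.sin (2*ρ*t)) * q t)
      MeasureTheory.volume 0 a := by
    refine key1 _ ?_ a haI
    exact continuousOn_const.mul
      (Real.continuous_sin.comp (continuous_const.mul continuous_id)).continuousOn
  have e0 : ρ * (∫ t in (0:ℝ)..a, Real.cos (ρ*(a-t)) * q t * S ρ t)
      = ∫ t in (0:ℝ)..a, ((Real.cos (ρ*(a-t)) * (ρ * S ρ t - Real.sin (ρ*t))) * q t
          + ((1/2) * Real.sin (ρ*a)) * q t
          + (-((1/2) * Real.sin (ρ*a) * Real.cos (2*ρ*t))) * q t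
          + ((1/2) * Real.cos (ρ*a) * Real.sin (2*ρ*t)) * q t) := by
    rw [← intervalIntegral.integral_const_mul]
    apply intervalIntegral.integral_congr
    intro t ht
    have k1 : Real.sin (ρ*(a-t) + ρ*t)
        = Real.sin (ρ*(a-t))*Real.cos (ρ*t) + Real.cos (ρ*(a-t))*Real.sin (ρ*t) :=
      Real.sin_add _ _
    have k2 : Real.sin (ρ*(a-t) - ρ*t)
        = Real.sin (ρ*(a-t))*Real.cos (ρ*t) - Real.cos (ρ*(a-t))*Real.sin (ρ*t) :=
      Real.sin_sub _ _
    have k3 : ρ*(a-t) + ρ*t = ρ*a := by ring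
    have k4 : ρ*(a-t) - ρ*t = ρ*a - 2*ρ*t := by ring
    have k5 : Real.sin (ρ*a - 2*ρ*t)
        = Real.sin (ρ*a)*Real.cos (2*ρ*t) - Real.cos (ρ*a)*Real.sin (2*ρ*t) :=
      Real.sin_sub _ _
    rw [k3] at k1
    rw [k4, k5] at k2
    linear_combination (q t / 2) * k2 - (q t / 2) * k1
  have e1 : (∫ t in (0:ℝ)..a, ((Real.cos (ρ*(a-t)) * (ρ * S ρ t - Real.sin (ρ*t))) * q t
          + ((1/2) * Real.sin (ρ*a)) * q t
          + (-((1/2) * Real.sin (ρ*a) * Real.cos (2*ρ*t))) * q t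
          + ((1/2) * Real.cos (ρ*a) * Real.sin (2*ρ*t)) * q t))
      = (∫ t in (0:ℝ)..a, (Real.cos (ρ*(a-t)) * (ρ * S ρ t - Real.sin (ρ*t))) * q t)
        + (∫ t in (0:ℝ)..a, ((1/2) * Real.sin (ρ*a)) * q t)
        + (∫ t in (0:ℝ)..a, (-((1/2) * Real.sin (ρ*a) * Real.cos (2*ρ*t))) * q t)
        + (∫ t in (0:ℝ)..a, ((1/2) * Real.cos (ρ*a) * Real.sin (2*ρ*t)) * q t) := by
    rw [intervalIntegral.integral_add ((i1.add i2).add i3) i4,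
      intervalIntegral.integral_add (i1.add i2) i3,
      intervalIntegral.integral_add i1 i2]
  have e2 : (∫ t in (0:ℝ)..a, ((1/2) * Real.sin (ρ*a)) * q t) = K * Real.sin (ρ*a) := by
    rw [intervalIntegral.integral_const_mul, hK]
    ring
  have e3 : (∫ t in (0:ℝ)..a, (-((1/2) * Real.sin (ρ*a) * Real.cos (2*ρ*t))) * q t) = G₂ ρ := by
    rw [hG₂def]
    simp only [hIcdef]
    rw [← intervalIntegral.integral_const_mul]
    apply intervalIntegral.integral_congr
    intro t ht
    ring
  have e4 : (∫ t in (0:ℝ)..a, ((1/2) * Real.cos (ρ*a) * Real.sin (2*ρ*t)) * q t) = G₃ ρ := by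
    rw [hG₃def]
    simp only [hIsdef]
    rw [← intervalIntegral.integral_const_mul]
    apply intervalIntegral.integral_congr
    intro t ht
    ring
  have e5 : ρ * (∫ t in (0:ℝ)..a, Real.cos (ρ*(a-t)) * q t * S ρ t)
      = G₁ ρ + K * Real.sin (ρ*a) + G₂ ρ + G₃ ρ := by
    rw [e0, e1, e2, e3, e4, hG₁def]
  rw [hT ρ hρ a haI]
  have hρne : ρ ≠ 0 := hρ.ne'
  have e6 : ρ * ((Real.cos (ρ * a) + ∫ t in (0:ℝ)..a, Real.cos (ρ*(a-t)) * q t * S ρ t)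
      - Real.cos (ρ * a) - (K / ρ) * Real.sin (ρ * a))
      = ρ * (∫ t in (0:ℝ)..a, Real.cos (ρ*(a-t)) * q t * S ρ t) - K * Real.sin (ρ*a) := by
    field_simp
    ring
  rw [e6, e5]
  ring
end

section
/- Let $I \geq 1$, let $a_1,\dots,a_I > 0$, let $L = \sum_{i=1}^I a_i$, and define $\psi_N(\rho) = \sum_{i=1}^I \sin(\rho a_i) \prod_{j \neq i} \cos(\rho a_j)$. Suppose $(m_n)$ and $(k_{i,n})$ are sequences of natural numbers with $m_n \to \infty$ and $\left| \frac{a_i}{L} - \frac{k_{i,n}}{m_n} \right| < m_n^{-1-1/I}$ for all $i$ and $n$, and set $\mu_n = \frac{2 m_n \pi}{L}$. Then there exists a constant $C > 0$ such that for all sufficiently large $n$: $|\psi_N(\mu_n)| \leq C\, \mu_n^{-1/I}$ and $\left| \psi_N'(\mu_n) - L \right| \leq C\, \mu_n^{-1/I}$. -/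
open Filter Finset Real

private lemma abs_prod_sub_one_le {ι : Type*} (s : Finset ι) (f : ι → ℝ)
    (h1 : ∀ i ∈ s, |f i| ≤ 1) :
    |(∏ i ∈ s, f i) - 1| ≤ ∑ i ∈ s, |f i - 1| := by
  induction s using Finset.cons_induction with
  | empty => simp
  | cons b s hb ih =>
    rw [Finset.prod_cons, Finset.sum_cons]
    have key : f b * ∏ i ∈ s, f i - 1 = f b * ((∏ i ∈ s, f i) - 1) + (f b - 1) := by ring
    rw [key]
    calc |f b * ((∏ i ∈ s, f i) - 1) + (f b - 1)|
        ≤ |f b| * |(∏ i ∈ s, f i) - 1| + |f b - 1| :=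
          (abs_add_le _ _).trans (by rw [abs_mul])
      _ ≤ 1 * (∑ i ∈ s, |f i - 1|) + |f b - 1| := by
          have hb1 : |f b| ≤ 1 := h1 b (Finset.mem_cons_self _ _)
          have hih := ih fun i hi => h1 i (Finset.mem_cons_of_mem hi)
          have := mul_le_mul hb1 hih (abs_nonneg _) zero_le_one
          linarith
      _ = |f b - 1| + ∑ i ∈ s, |f i - 1| := by ring

/-- Values of the zero-potential characteristic function
`ψ_N(ρ) = ∑ i, sin(ρ aᵢ) ∏_{j ≠ i} cos(ρ aⱼ)` and its derivative at the
approximate eigenvalues `μ_n = 2 m_n π / L`: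
`ψ_N(μ_n) = O(μ_n^{-1/I})` and `ψ_N'(μ_n) = L + O(μ_n^{-1/I})`. -/
theorem characteristic_function_at_approximate_eigenvalues
    (I : ℕ) (hI : 1 ≤ I) (a : Fin I → ℝ) (ha : ∀ i, 0 < a i)
    (L : ℝ) (hL : L = ∑ i, a i)
    (ψ : ℝ → ℝ)
    (hψ : ψ = fun ρ : ℝ => ∑ i : Fin I,
      Real.sin (ρ * a i) * ∏ j ∈ Finset.univ.erase i, Real.cos (ρ * a j))
    (m : ℕ → ℕ) (k : Fin I → ℕ → ℕ)
    (hm : Tendsto m atTop atTop)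
    (happrox : ∀ i : Fin I, ∀ n : ℕ,
      |a i / L - (k i n : ℝ) / (m n : ℝ)| < (m n : ℝ) ^ (-1 - 1 / (I : ℝ) : ℝ))
    (μ : ℕ → ℝ) (hμ : ∀ n, μ n = 2 * (m n : ℝ) * Real.pi / L) :
    ∃ C : ℝ, 0 < C ∧
      ∀ᶠ n in atTop,
        |ψ (μ n)| ≤ C * (μ n) ^ (-(1 / (I : ℝ)) : ℝ) ∧
        |deriv ψ (μ n) - L| ≤ C * (μ n) ^ (-(1 / (I : ℝ)) : ℝ) := by
  have hπ := Real.pi_pos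
  have hIne : Nonempty (Fin I) := ⟨⟨0, hI⟩⟩
  have hL0 : 0 < L := by
    rw [hL]; exact Finset.sum_pos (fun i _ => ha i) Finset.univ_nonempty
  have hI0 : (0 : ℝ) < I := by exact_mod_cast hI
  set A : ℝ := 2 * π * I + 6 * π ^ 2 * I * L with hA
  have hA0 : 0 < A := by positivity
  set B : ℝ := (2 * π / L) ^ (1 / (I : ℝ)) with hB
  have hB0 : 0 < B := Real.rpow_pos_of_pos (by positivity) _
  refine ⟨A * B, by positivity, ?_⟩
  filter_upwards [hm.eventually_ge_atTop 1] with n hn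
  set M : ℝ := (m n : ℝ) with hMdef
  have hM1 : (1 : ℝ) ≤ M := by rw [hMdef]; exact_mod_cast hn
  have hM0 : (0 : ℝ) < M := by linarith
  set ε : ℝ := M ^ (-(1 / (I : ℝ))) with hε
  have hε0 : 0 < ε := Real.rpow_pos_of_pos hM0 _
  have hε1 : ε ≤ 1 := Real.rpow_le_one_of_one_le_of_nonpos hM1 (by
    rw [neg_nonpos]; positivity)
  have hμn : μ n = (2 * π / L) * M := by rw [hμ n]; ring
  have hμ0 : 0 < μ n := by rw [hμn]; positivity
  have hconv : B * (μ n) ^ (-(1 / (I : ℝ))) = ε := by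
    rw [hμn, Real.mul_rpow (by positivity) hM0.le, hB, ← mul_assoc,
      ← Real.rpow_add (by positivity : (0 : ℝ) < 2 * π / L),
      add_neg_cancel, Real.rpow_zero, one_mul]
  -- pointwise sine/cosine estimates
  have key : ∀ i : Fin I, |Real.sin (μ n * a i)| ≤ 2 * π * ε ∧
      |Real.cos (μ n * a i) - 1| ≤ (2 * π * ε) ^ 2 / 2 := by
    intro i
    set θ : ℝ := 2 * π * (M * (a i / L) - (k i n : ℝ)) with hθdef
    have heq : μ n * a i = θ + (k i n : ℝ) * (2 * π) := by
      rw [hμ n, hθdef]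
      field_simp
      ring
    have hθ : |θ| ≤ 2 * π * ε := by
      have h1 : |M * (a i / L) - (k i n : ℝ)| = M * |a i / L - (k i n : ℝ) / M| := by
        have h : M * (a i / L) - (k i n : ℝ) = M * (a i / L - (k i n : ℝ) / M) := by
          field_simp
        rw [h, abs_mul, abs_of_pos hM0]
      have h3 : M * M ^ (-1 - 1 / (I : ℝ)) = ε := by
        rw [hε, show -(1 / (I : ℝ)) = 1 + (-1 - 1 / (I : ℝ)) by ring,
          Real.rpow_add hM0, Real.rpow_one]
      calc |θ| = 2 * π * |M * (a i / L) - (k i n : ℝ)| := by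
            rw [hθdef, abs_mul, abs_of_pos (by positivity : (0 : ℝ) < 2 * π)]
        _ = 2 * π * (M * |a i / L - (k i n : ℝ) / M|) := by rw [h1]
        _ ≤ 2 * π * (M * M ^ (-1 - 1 / (I : ℝ))) := by
            have := mul_le_mul_of_nonneg_left (happrox i n).le hM0.le
            have h2π : (0:ℝ) ≤ 2 * π := by positivity
            exact mul_le_mul_of_nonneg_left this h2π
        _ = 2 * π * ε := by rw [h3]
    constructor
    · rw [heq, Real.sin_add_nat_mul_two_pi]
      exact Real.abs_sin_le_abs.trans hθ
    · rw [heq, Real.cos_add_nat_mul_two_pi]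
      have hc1 : Real.cos θ ≤ 1 := Real.cos_le_one θ
      have hc2 : 1 - θ ^ 2 / 2 ≤ Real.cos θ := Real.one_sub_sq_div_two_le_cos
      have hθsq : θ ^ 2 ≤ (2 * π * ε) ^ 2 := by
        rw [← sq_abs θ]
        exact pow_le_pow_left₀ (abs_nonneg θ) hθ 2
      rw [abs_sub_comm, abs_of_nonneg (by linarith)]
      linarith
  have hcos1 : ∀ j : Fin I, |Real.cos (μ n * a j)| ≤ 1 := fun j => Real.abs_cos_le_one _
  have hprod1 : ∀ s : Finset (Fin I), |∏ j ∈ s, Real.cos (μ n * a j)| ≤ 1 := by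
    intro s
    rw [Finset.abs_prod]
    exact Finset.prod_le_one (fun j _ => abs_nonneg _) (fun j _ => hcos1 j)
  -- bound on ψ(μ n)
  have hψbound : |ψ (μ n)| ≤ A * ε := by
    simp only [hψ]
    calc |∑ i : Fin I, Real.sin (μ n * a i) * ∏ j ∈ univ.erase i, Real.cos (μ n * a j)|
        ≤ ∑ i : Fin I, |Real.sin (μ n * a i) * ∏ j ∈ univ.erase i, Real.cos (μ n * a j)| :=
          Finset.abs_sum_le_sum_abs _ _
      _ ≤ ∑ _i : Fin I, 2 * π * ε := by
          refine Finset.sum_le_sum fun i _ => ?_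
          rw [abs_mul]
          calc |Real.sin (μ n * a i)| * |∏ j ∈ univ.erase i, Real.cos (μ n * a j)|
              ≤ (2 * π * ε) * 1 :=
                mul_le_mul (key i).1 (hprod1 _) (abs_nonneg _) (by positivity)
            _ = 2 * π * ε := mul_one _
      _ = (I : ℝ) * (2 * π * ε) := by
          rw [Finset.sum_const, Finset.card_univ, Fintype.card_fin, nsmul_eq_mul]
      _ ≤ A * ε := by
          have h6 : 0 ≤ 6 * π ^ 2 * (I : ℝ) * L * ε := by positivity
          rw [hA]; nlinarith [h6]
  -- the derivative
  have hcderiv : ∀ (ρ : ℝ) (j : Fin I),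
      HasDerivAt (fun x => Real.cos (x * a j)) (-Real.sin (ρ * a j) * a j) ρ := fun ρ j =>
    by have h := (Real.hasDerivAt_cos (ρ * a j)).comp ρ (hasDerivAt_mul_const (a j)); exact h
  have hD : ∀ ρ : ℝ, HasDerivAt ψ
      (∑ i : Fin I, (Real.cos (ρ * a i) * a i * ∏ j ∈ univ.erase i, Real.cos (ρ * a j)
        + Real.sin (ρ * a i) * ∑ l ∈ univ.erase i,
            (∏ j ∈ (univ.erase i).erase l, Real.cos (ρ * a j)) *
              (-Real.sin (ρ * a l) * a l))) ρ := by
    intro ρ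
    rw [hψ]
    refine HasDerivAt.fun_sum fun i _ => ?_
    have hs : HasDerivAt (fun x => Real.sin (x * a i)) (Real.cos (ρ * a i) * a i) ρ :=
      by have h := (Real.hasDerivAt_sin (ρ * a i)).comp ρ (hasDerivAt_mul_const (a i)); exact h
    have hp : HasDerivAt (fun x => ∏ j ∈ univ.erase i, Real.cos (x * a j))
        (∑ l ∈ univ.erase i, (∏ j ∈ (univ.erase i).erase l, Real.cos (ρ * a j)) *
          (-Real.sin (ρ * a l) * a l)) ρ := by
      have := HasDerivAt.fun_finsetProd (u := univ.erase i)
        (f := fun j x => Real.cos (x * a j))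
        (f' := fun l => -Real.sin (ρ * a l) * a l) (x := ρ) (fun j _ => hcderiv ρ j)
      simpa [smul_eq_mul] using this
    exact hs.mul hp
  have hDeq := (hD (μ n)).deriv
  -- product close to one
  have hPsub : |(∏ j : Fin I, Real.cos (μ n * a j)) - 1| ≤ (I : ℝ) * ((2 * π * ε) ^ 2 / 2) := by
    refine (abs_prod_sub_one_le univ _ (fun j _ => hcos1 j)).trans ?_
    calc ∑ j : Fin I, |Real.cos (μ n * a j) - 1| ≤ ∑ _j : Fin I, (2 * π * ε) ^ 2 / 2 :=
          Finset.sum_le_sum fun j _ => (key j).2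
      _ = (I : ℝ) * ((2 * π * ε) ^ 2 / 2) := by
          rw [Finset.sum_const, Finset.card_univ, Fintype.card_fin, nsmul_eq_mul]
  have hterm : ∀ i : Fin I,
      |Real.cos (μ n * a i) * a i * ∏ j ∈ univ.erase i, Real.cos (μ n * a j)
        + Real.sin (μ n * a i) * ∑ l ∈ univ.erase i,
            (∏ j ∈ (univ.erase i).erase l, Real.cos (μ n * a j)) *
              (-Real.sin (μ n * a l) * a l) - a i|
      ≤ a i * ((I : ℝ) * ((2 * π * ε) ^ 2 / 2)) + (2 * π * ε) * ((2 * π * ε) * L) := by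
    intro i
    have hP : Real.cos (μ n * a i) * a i * ∏ j ∈ univ.erase i, Real.cos (μ n * a j)
        = a i * ∏ j : Fin I, Real.cos (μ n * a j) := by
      rw [← Finset.mul_prod_erase univ _ (Finset.mem_univ i)]; ring
    rw [hP]
    have hR : |∑ l ∈ univ.erase i, (∏ j ∈ (univ.erase i).erase l, Real.cos (μ n * a j)) *
        (-Real.sin (μ n * a l) * a l)| ≤ (2 * π * ε) * L := by
      refine (Finset.abs_sum_le_sum_abs _ _).trans ?_
      have step : ∀ l ∈ univ.erase i,
          |(∏ j ∈ (univ.erase i).erase l, Real.cos (μ n * a j)) *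
            (-Real.sin (μ n * a l) * a l)| ≤ (2 * π * ε) * a l := by
        intro l _
        rw [abs_mul, abs_mul, abs_neg, abs_of_pos (ha l)]
        calc |∏ j ∈ (univ.erase i).erase l, Real.cos (μ n * a j)| *
              (|Real.sin (μ n * a l)| * a l)
            ≤ 1 * ((2 * π * ε) * a l) := by
              refine mul_le_mul (hprod1 _) ?_ (mul_nonneg (abs_nonneg _) (ha l).le) zero_le_one
              exact mul_le_mul_of_nonneg_right (key l).1 (ha l).le
          _ = (2 * π * ε) * a l := one_mul _
      refine (Finset.sum_le_sum step).trans ?_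
      rw [← Finset.mul_sum]
      refine mul_le_mul_of_nonneg_left ?_ (by positivity)
      rw [hL]
      exact Finset.sum_le_sum_of_subset_of_nonneg (Finset.erase_subset _ _)
        (fun j _ _ => (ha j).le)
    calc |a i * ∏ j : Fin I, Real.cos (μ n * a j)
          + Real.sin (μ n * a i) * ∑ l ∈ univ.erase i,
              (∏ j ∈ (univ.erase i).erase l, Real.cos (μ n * a j)) *
                (-Real.sin (μ n * a l) * a l) - a i|
        = |a i * ((∏ j : Fin I, Real.cos (μ n * a j)) - 1)
          + Real.sin (μ n * a i) * ∑ l ∈ univ.erase i,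
              (∏ j ∈ (univ.erase i).erase l, Real.cos (μ n * a j)) *
                (-Real.sin (μ n * a l) * a l)| := by congr 1; ring
      _ ≤ |a i * ((∏ j : Fin I, Real.cos (μ n * a j)) - 1)|
          + |Real.sin (μ n * a i) * ∑ l ∈ univ.erase i,
              (∏ j ∈ (univ.erase i).erase l, Real.cos (μ n * a j)) *
                (-Real.sin (μ n * a l) * a l)| := abs_add_le _ _
      _ = a i * |(∏ j : Fin I, Real.cos (μ n * a j)) - 1|
          + |Real.sin (μ n * a i)| * |∑ l ∈ univ.erase i,
              (∏ j ∈ (univ.erase i).erase l, Real.cos (μ n * a j)) *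
                (-Real.sin (μ n * a l) * a l)| := by
            rw [abs_mul, abs_mul, abs_of_pos (ha i)]
      _ ≤ a i * ((I : ℝ) * ((2 * π * ε) ^ 2 / 2)) + (2 * π * ε) * ((2 * π * ε) * L) := by
            refine add_le_add (mul_le_mul_of_nonneg_left hPsub (ha i).le) ?_
            exact mul_le_mul (key i).1 hR (abs_nonneg _) (by positivity)
  have hDbound : |deriv ψ (μ n) - L| ≤ A * ε := by
    rw [hDeq, hL, ← Finset.sum_sub_distrib]
    refine (Finset.abs_sum_le_sum_abs _ _).trans ?_
    have hsq : ε ^ 2 ≤ ε := by nlinarith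
    calc ∑ i : Fin I, |Real.cos (μ n * a i) * a i * ∏ j ∈ univ.erase i, Real.cos (μ n * a j)
            + Real.sin (μ n * a i) * ∑ l ∈ univ.erase i,
                (∏ j ∈ (univ.erase i).erase l, Real.cos (μ n * a j)) *
                  (-Real.sin (μ n * a l) * a l) - a i|
        ≤ ∑ i : Fin I, (a i * ((I : ℝ) * ((2 * π * ε) ^ 2 / 2))
            + (2 * π * ε) * ((2 * π * ε) * L)) :=
          Finset.sum_le_sum fun i _ => hterm i
      _ = L * ((I : ℝ) * ((2 * π * ε) ^ 2 / 2)) + (I : ℝ) * ((2 * π * ε) * ((2 * π * ε) * L)) := by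
          rw [Finset.sum_add_distrib, ← Finset.sum_mul, ← hL, Finset.sum_const,
            Finset.card_univ, Fintype.card_fin, nsmul_eq_mul]
      _ = 6 * π ^ 2 * (I : ℝ) * L * ε ^ 2 := by ring
      _ ≤ 6 * π ^ 2 * (I : ℝ) * L * ε :=
          mul_le_mul_of_nonneg_left hsq (by positivity)
      _ ≤ A * ε := by
          have h2 : 0 ≤ 2 * π * (I : ℝ) * ε := by positivity
          rw [hA]; nlinarith [h2]
  have hfin : A * ε = (A * B) * (μ n) ^ (-(1 / (I : ℝ)) : ℝ) := by
    rw [← hconv]; ring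
  exact ⟨le_of_le_of_eq hψbound hfin, le_of_le_of_eq hDbound hfin⟩
end

section
/- Let $I \geq 1$, let $a_1,\dots,a_I > 0$, let $L = \sum_{i=1}^I a_i$, and define $\psi_N(\rho) = \sum_{i=1}^I \sin(\rho a_i) \prod_{j \neq i} \cos(\rho a_j)$. Suppose $(m_n)$ and $(k_{i,n})$ are sequences of natural numbers with $m_n \to \infty$ and $\left| \frac{a_i}{L} - \frac{k_{i,n}}{m_n} \right| < m_n^{-1-1/I}$ for all $i$ and $n$, and set $\mu_n = \frac{2 m_n \pi}{L}$. Then there exist a constant $C > 0$ and a sequence of positive reals $(\rho_n)$ such that, for all sufficiently large $n$, $\psi_N(\rho_n) = 0$ and $|\rho_n - \mu_n| \leq C\, \mu_n^{-1/I}$. -/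
open Filter

set_option maxHeartbeats 1000000

private lemma psi_sign_aux {I : ℕ} (a : Fin I → ℝ) (K : Fin I → ℕ) (ρ : ℝ)
    (h0 : ∀ i, 0 ≤ ρ * a i - 2 * Real.pi * K i)
    (h1 : ∀ i, ρ * a i - 2 * Real.pi * K i ≤ Real.pi / 2) :
    0 ≤ ∑ i : Fin I,
      Real.sin (ρ * a i) * ∏ j ∈ Finset.univ.erase i, Real.cos (ρ * a j) := by
  have keys : ∀ i, Real.sin (ρ * a i) = Real.sin (ρ * a i - 2 * Real.pi * K i) := by
    intro i
    conv_lhs => rw [show ρ * a i = (ρ * a i - 2 * Real.pi * K i) + (K i : ℝ) * (2 * Real.pi) by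
      ring]
    rw [Real.sin_add_nat_mul_two_pi]
  have keyc : ∀ i, Real.cos (ρ * a i) = Real.cos (ρ * a i - 2 * Real.pi * K i) := by
    intro i
    conv_lhs => rw [show ρ * a i = (ρ * a i - 2 * Real.pi * K i) + (K i : ℝ) * (2 * Real.pi) by
      ring]
    rw [Real.cos_add_nat_mul_two_pi]
  refine Finset.sum_nonneg fun i _ => mul_nonneg ?_ (Finset.prod_nonneg fun j _ => ?_)
  · rw [keys i]
    exact Real.sin_nonneg_of_nonneg_of_le_pi (h0 i)
      ((h1 i).trans (by linarith [Real.pi_pos]))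
  · rw [keyc j]
    exact Real.cos_nonneg_of_mem_Icc ⟨by linarith [h0 j, Real.pi_pos], h1 j⟩

private lemma psi_sign_aux' {I : ℕ} (a : Fin I → ℝ) (K : Fin I → ℕ) (ρ : ℝ)
    (h0 : ∀ i, -(Real.pi / 2) ≤ ρ * a i - 2 * Real.pi * K i)
    (h1 : ∀ i, ρ * a i - 2 * Real.pi * K i ≤ 0) :
    (∑ i : Fin I,
      Real.sin (ρ * a i) * ∏ j ∈ Finset.univ.erase i, Real.cos (ρ * a j)) ≤ 0 := by
  have keys : ∀ i, Real.sin (ρ * a i) = Real.sin (ρ * a i - 2 * Real.pi * K i) := by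
    intro i
    conv_lhs => rw [show ρ * a i = (ρ * a i - 2 * Real.pi * K i) + (K i : ℝ) * (2 * Real.pi) by
      ring]
    rw [Real.sin_add_nat_mul_two_pi]
  have keyc : ∀ i, Real.cos (ρ * a i) = Real.cos (ρ * a i - 2 * Real.pi * K i) := by
    intro i
    conv_lhs => rw [show ρ * a i = (ρ * a i - 2 * Real.pi * K i) + (K i : ℝ) * (2 * Real.pi) by
      ring]
    rw [Real.cos_add_nat_mul_two_pi]
  refine Finset.sum_nonpos fun i _ => mul_nonpos_of_nonpos_of_nonneg ?_
    (Finset.prod_nonneg fun j _ => ?_)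
  · rw [keys i]
    exact Real.sin_nonpos_of_nonpos_of_neg_pi_le (h1 i)
      (le_trans (by linarith [Real.pi_pos]) (h0 i))
  · rw [keyc j]
    exact Real.cos_nonneg_of_mem_Icc ⟨h0 j, (h1 j).trans (by linarith [Real.pi_pos])⟩

/-- Existence of genuine zeros of the zero-potential characteristic function
`ψ_N(ρ) = ∑ i, sin(ρ aᵢ) ∏_{j ≠ i} cos(ρ aⱼ)` near the approximate
eigenvalues `μ_n = 2 m_n π / L`: there are `ρ_n > 0` with `ψ_N(ρ_n) = 0` and
`|ρ_n - μ_n| ≤ C μ_n^{-1/I}` for all large `n`. -/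
theorem zeros_near_approximate_eigenvalues
    (I : ℕ) (hI : 1 ≤ I) (a : Fin I → ℝ) (ha : ∀ i, 0 < a i)
    (L : ℝ) (hL : L = ∑ i, a i)
    (ψ : ℝ → ℝ)
    (hψ : ψ = fun ρ : ℝ => ∑ i : Fin I,
      Real.sin (ρ * a i) * ∏ j ∈ Finset.univ.erase i, Real.cos (ρ * a j))
    (m : ℕ → ℕ) (k : Fin I → ℕ → ℕ)
    (hm : Tendsto m atTop atTop)
    (happrox : ∀ i : Fin I, ∀ n : ℕ,
      |a i / L - (k i n : ℝ) / (m n : ℝ)| < (m n : ℝ) ^ (-1 - 1 / (I : ℝ) : ℝ))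
    (μ : ℕ → ℝ) (hμ : ∀ n, μ n = 2 * (m n : ℝ) * Real.pi / L) :
    ∃ C : ℝ, 0 < C ∧
    ∃ ρ : ℕ → ℝ, (∀ n, 0 < ρ n) ∧
      ∀ᶠ n in atTop,
        ψ (ρ n) = 0 ∧ |ρ n - μ n| ≤ C * (μ n) ^ (-(1 / (I : ℝ)) : ℝ) := by
  classical
  have hpi := Real.pi_pos
  haveI : Nonempty (Fin I) := ⟨⟨0, hI⟩⟩
  have hIpos : (0 : ℝ) < I := by exact_mod_cast hI
  set s : ℝ := 1 / (I : ℝ) with hs_def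
  have hs : 0 < s := by positivity
  set amin : ℝ := Finset.univ.inf' Finset.univ_nonempty a with hamin_def
  set amax : ℝ := Finset.univ.sup' Finset.univ_nonempty a with hamax_def
  have haminle : ∀ i, amin ≤ a i := fun i => Finset.inf'_le a (Finset.mem_univ i)
  have hamaxle : ∀ i, a i ≤ amax := fun i => Finset.le_sup' a (Finset.mem_univ i)
  have hamin : 0 < amin := by
    obtain ⟨i, _, hi⟩ := Finset.exists_mem_eq_inf' (Finset.univ_nonempty (α := Fin I)) a
    rw [hamin_def, hi]; exact ha i
  have hamax : 0 < amax := lt_of_lt_of_le hamin ((haminle ⟨0, hI⟩).trans (hamaxle ⟨0, hI⟩))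
  have hLpos : 0 < L := by
    rw [hL]; exact Finset.sum_pos (fun i _ => ha i) Finset.univ_nonempty
  -- continuous ψ
  have hcont : Continuous ψ := by
    rw [hψ]
    exact continuous_finset_sum _ fun i _ =>
      ((Real.continuous_sin.comp (continuous_id.mul continuous_const)).mul
        (continuous_finset_prod _ fun j _ =>
          Real.continuous_cos.comp (continuous_id.mul continuous_const)))
  -- quantities
  set ε : ℕ → ℝ := fun n => 2 * Real.pi * (m n : ℝ) ^ (-s) with hε_def
  set δ : ℕ → ℝ := fun n => ε n / amin with hδ_def
  set C : ℝ := 2 * Real.pi / amin * (L / (2 * Real.pi)) ^ (-s) with hC_def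
  have hCpos : 0 < C := by
    have : 0 < (L / (2 * Real.pi)) ^ (-s) := Real.rpow_pos_of_pos (by positivity) _
    positivity
  -- the good-set predicate
  set G : ℕ → Prop := fun n =>
    1 ≤ m n ∧ ε n * (1 + amax / amin) ≤ Real.pi / 2 ∧ δ n < μ n with hG_def
  -- eventually good
  have hmR : Tendsto (fun n => (m n : ℝ)) atTop atTop :=
    tendsto_natCast_atTop_atTop.comp hm
  have hε0 : Tendsto ε atTop (nhds 0) := by
    have h := (tendsto_rpow_neg_atTop hs).comp hmR
    have := h.const_mul (2 * Real.pi)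
    simpa [hε_def, mul_comm] using this
  have hδ0 : Tendsto δ atTop (nhds 0) := by
    simpa [hδ_def, div_eq_mul_inv] using hε0.mul_const amin⁻¹
  have hμtop : Tendsto μ atTop atTop := by
    have h : Tendsto (fun n => 2 * (m n : ℝ) * Real.pi / L) atTop atTop := by
      apply Tendsto.atTop_div_const hLpos
      exact (hmR.const_mul_atTop (by positivity)).atTop_mul_const hpi
    exact h.congr fun n => (hμ n).symm
  have hGev : ∀ᶠ n in atTop, G n := by
    have h1 : ∀ᶠ n in atTop, 1 ≤ m n := hm.eventually_ge_atTop 1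
    have h2 : ∀ᶠ n in atTop, ε n * (1 + amax / amin) ≤ Real.pi / 2 := by
      have := (hε0.mul_const (1 + amax / amin)).eventually_lt_const
        (show (0 : ℝ) * (1 + amax / amin) < Real.pi / 2 by simpa using by positivity)
      filter_upwards [this] with n hn using le_of_lt (by simpa using hn)
    have h3 : ∀ᶠ n in atTop, δ n < μ n := by
      have hδ1 : ∀ᶠ n in atTop, δ n < 1 := hδ0.eventually_lt_const one_pos
      have hμ1 : ∀ᶠ n in atTop, (1 : ℝ) ≤ μ n := hμtop.eventually_ge_atTop 1
      filter_upwards [hδ1, hμ1] with n h h' using lt_of_lt_of_le h h'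
    filter_upwards [h1, h2, h3] with n a b c using ⟨a, b, c⟩
  -- existence of a zero for each good n
  have exzero : ∀ n, G n →
      ∃ r, r ∈ Set.Icc (μ n - δ n) (μ n + δ n) ∧ ψ r = 0 := by
    intro n hG
    obtain ⟨hm1, hsmall, hδμ⟩ := hG
    have hM0 : (0 : ℝ) < (m n : ℝ) := by exact_mod_cast hm1
    have hεpos : 0 < ε n := by
      have := Real.rpow_pos_of_pos hM0 (-s); positivity
    have hδpos : 0 < δ n := by rw [hδ_def]; positivity
    -- error bound
    have herr : ∀ i, |μ n * a i - 2 * Real.pi * (k i n : ℝ)| ≤ ε n := by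
      intro i
      have heq : μ n * a i - 2 * Real.pi * (k i n : ℝ)
          = (2 * Real.pi * (m n : ℝ)) * (a i / L - (k i n : ℝ) / (m n : ℝ)) := by
        rw [hμ n]; field_simp
      rw [heq, abs_mul, abs_of_pos (by positivity)]
      have hb := (happrox i n).le
      have := mul_le_mul_of_nonneg_left hb (le_of_lt (show (0:ℝ) < 2 * Real.pi * (m n : ℝ) by
        positivity))
      refine this.trans (le_of_eq ?_)
      have hpow : (m n : ℝ) * (m n : ℝ) ^ (-1 - 1 / (I : ℝ) : ℝ) = (m n : ℝ) ^ (-s) := by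
        rw [show (-s : ℝ) = 1 + (-1 - 1 / (I : ℝ)) by rw [hs_def]; ring,
          Real.rpow_add hM0, Real.rpow_one]
      rw [hε_def]; dsimp only; rw [← hpow]; ring
    have hδamin : δ n * amin = ε n := by
      rw [hδ_def]; field_simp
    have hδa_lower : ∀ i, ε n ≤ δ n * a i := by
      intro i
      rw [← hδamin]
      exact mul_le_mul_of_nonneg_left (haminle i) hδpos.le
    have hδa_upper : ∀ i, δ n * a i ≤ ε n * (amax / amin) := by
      intro i
      have : δ n * a i ≤ δ n * amax := mul_le_mul_of_nonneg_left (hamaxle i) hδpos.le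
      refine this.trans (le_of_eq ?_)
      rw [hδ_def]; field_simp; try ring
    -- sign at μ + δ
    have hpos : 0 ≤ ψ (μ n + δ n) := by
      rw [hψ]
      refine psi_sign_aux a (fun i => k i n) _ (fun i => ?_) (fun i => ?_)
      · have h1 := abs_le.1 (herr i)
        have h2 := hδa_lower i
        nlinarith [h1.1, h2]
      · have h1 := abs_le.1 (herr i)
        have h2 := hδa_upper i
        have h3 : ε n + ε n * (amax / amin) = ε n * (1 + amax / amin) := by ring
        nlinarith [h1.2]
    -- sign at μ - δ
    have hneg : ψ (μ n - δ n) ≤ 0 := by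
      rw [hψ]
      refine psi_sign_aux' a (fun i => k i n) _ (fun i => ?_) (fun i => ?_)
      · have h1 := abs_le.1 (herr i)
        have h2 := hδa_upper i
        nlinarith [h1.1]
      · have h1 := abs_le.1 (herr i)
        have h2 := hδa_lower i
        nlinarith [h1.2]
    have hle : μ n - δ n ≤ μ n + δ n := by linarith
    have := intermediate_value_Icc hle hcont.continuousOn
    have h0mem : (0 : ℝ) ∈ Set.Icc (ψ (μ n - δ n)) (ψ (μ n + δ n)) := ⟨hneg, hpos⟩
    obtain ⟨r, hr, hr0⟩ := this h0mem
    exact ⟨r, hr, hr0⟩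
  -- define ρ
  refine ⟨C, hCpos, fun n => if h : G n then (exzero n h).choose else 1, fun n => ?_, ?_⟩
  · by_cases h : G n
    · simp only [dif_pos h]
      obtain ⟨hmem, _⟩ := (exzero n h).choose_spec
      have hδμ := h.2.2
      linarith [hmem.1]
    · simp only [dif_neg h]; exact one_pos
  filter_upwards [hGev] with n hGn
  simp only [dif_pos hGn]
  obtain ⟨hmem, hzero⟩ := (exzero n hGn).choose_spec
  refine ⟨hzero, ?_⟩
  have habs : |(exzero n hGn).choose - μ n| ≤ δ n :=
    abs_le.2 ⟨by linarith [hmem.1], by linarith [hmem.2]⟩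
  refine habs.trans (le_of_eq ?_)
  -- δ n = C * μ n ^ (-s)
  have hM0 : (0 : ℝ) < (m n : ℝ) := by exact_mod_cast hGn.1
  have hμpos : 0 < μ n := by rw [hμ n]; positivity
  have hMeq : (m n : ℝ) = L / (2 * Real.pi) * μ n := by
    rw [hμ n]; field_simp
  have hsplit : (m n : ℝ) ^ (-s) = (L / (2 * Real.pi)) ^ (-s) * (μ n) ^ (-s) := by
    rw [hMeq, Real.mul_rpow (by positivity) hμpos.le]
  rw [hδ_def, hε_def]
  dsimp only
  rw [hsplit, hC_def, hs_def]
  ring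
end

section
/- Let $a > 0$ and let $q$ be a Lebesgue integrable function on $[0,a]$ with $\int_0^a q(x)\, dx = 0$. Suppose that for every continuously differentiable function $y : [0,a] \to \mathbb{R}$ one has $\int_0^a \big( (y'(x))^2 + q(x)\, y(x)^2 \big)\, dx \geq 0$. Then $q = 0$ almost everywhere on $[0,a]$. -/
open MeasureTheory Set intervalIntegral

/-- Variational step of the Ambarzumyan theorem: if `∫₀ᵃ q = 0` and the
quadratic form `∫₀ᵃ ((y')² + q y²)` is nonnegative for every continuously
differentiable test function `y`, then `q = 0` almost everywhere on `[0,a]`. -/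
theorem potential_zero_of_nonneg_form
    (a : ℝ) (ha : 0 < a) (q : ℝ → ℝ)
    (hq : MeasureTheory.IntegrableOn q (Set.Icc 0 a))
    (hint : (∫ x in (0 : ℝ)..a, q x) = 0)
    (hform : ∀ y : ℝ → ℝ, ContDiff ℝ 1 y →
      0 ≤ ∫ x in (0 : ℝ)..a, ((deriv y x) ^ 2 + q x * (y x) ^ 2)) :
    ∀ᵐ x ∂(MeasureTheory.volume.restrict (Set.Icc (0 : ℝ) a)), q x = 0 := by
  have ha' : (0 : ℝ) ≤ a := ha.le
  -- Step 1: for every `C¹` function `z`, `∫₀ᵃ q z = 0`.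
  have key : ∀ z : ℝ → ℝ, ContDiff ℝ 1 z → (∫ x in (0 : ℝ)..a, q x * z x) = 0 := by
    intro z hz
    have hzc : Continuous z := hz.continuous
    have hz' : Continuous (deriv z) := hz.continuous_deriv le_rfl
    have hzd : Differentiable ℝ z := hz.differentiable one_ne_zero
    have iq : IntervalIntegrable q volume 0 a :=
      (intervalIntegrable_iff_integrableOn_Ioc_of_le ha').mpr
        (hq.mono_set Ioc_subset_Icc_self)
    have iqz : IntervalIntegrable (fun x => q x * z x) volume 0 a :=
      (intervalIntegrable_iff_integrableOn_Ioc_of_le ha').mpr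
        ((hq.mul_continuousOn hzc.continuousOn isCompact_Icc).mono_set Ioc_subset_Icc_self)
    have iA : IntervalIntegrable (fun x => (deriv z x) ^ 2 + q x * (z x) ^ 2) volume 0 a := by
      apply IntervalIntegrable.add
      · exact (hz'.pow 2).intervalIntegrable 0 a
      · exact (intervalIntegrable_iff_integrableOn_Ioc_of_le ha').mpr
          ((hq.mul_continuousOn (hzc.pow 2).continuousOn isCompact_Icc).mono_set
            Ioc_subset_Icc_self)
    set A := ∫ x in (0 : ℝ)..a, ((deriv z x) ^ 2 + q x * (z x) ^ 2) with hA
    set B := ∫ x in (0 : ℝ)..a, q x * z x with hB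
    have h1 : ∀ ε : ℝ, 0 ≤ ε ^ 2 * A + 2 * ε * B := by
      intro ε
      have hy : ContDiff ℝ 1 (fun x => 1 + ε * z x) :=
        contDiff_const.add (contDiff_const.mul hz)
      have hd : deriv (fun x => 1 + ε * z x) = fun x => ε * deriv z x := by
        funext x
        rw [deriv_const_add]
        exact deriv_const_mul ε (hzd x)
      have h0 := hform _ hy
      rw [hd] at h0
      have heq : ∀ x ∈ Set.uIcc (0:ℝ) a, ((ε * deriv z x) ^ 2 + q x * (1 + ε * z x) ^ 2)
          = ε ^ 2 * ((deriv z x) ^ 2 + q x * (z x) ^ 2) + (2 * ε) * (q x * z x) + q x := by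
        intro x _; ring
      rw [intervalIntegral.integral_congr heq,
        intervalIntegral.integral_add ((iA.const_mul _).add (iqz.const_mul _)) iq,
        intervalIntegral.integral_add (iA.const_mul _) (iqz.const_mul _),
        intervalIntegral.integral_const_mul, intervalIntegral.integral_const_mul,
        hint, ← hA, ← hB] at h0
      linarith
    -- Conclude `B = 0` from nonnegativity of the quadratic `ε ↦ ε²A + 2εB`.
    by_contra hBne
    have hB2 : 0 < B ^ 2 := by positivity
    set c : ℝ := |A| + 1 with hc
    have hc0 : (0 : ℝ) < c := by positivity
    have hAc : A ≤ c := by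
      have := le_abs_self A; simp only [hc]; linarith
    have h2 := h1 (-B / c)
    have h3 : (-B / c) ^ 2 * A + 2 * (-B / c) * B = (B ^ 2 * A - 2 * B ^ 2 * c) / c ^ 2 := by
      field_simp; ring
    rw [h3] at h2
    have h4 : 0 ≤ B ^ 2 * A - 2 * B ^ 2 * c := by
      have := (div_nonneg_iff.mp h2)
      rcases this with ⟨h, _⟩ | ⟨_, h⟩
      · exact h
      · nlinarith [sq_nonneg c]
    nlinarith [mul_nonneg (sq_nonneg B) (by linarith : (0:ℝ) ≤ c - A), mul_pos hB2 hc0]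
  -- Step 2: apply density of smooth compactly supported functions.
  have hloc : LocallyIntegrable q (volume.restrict (Icc (0:ℝ) a)) :=
    hq.locallyIntegrable
  have := ae_eq_zero_of_integral_contDiff_smul_eq_zero hloc ?_
  · exact this
  · intro g hg hgsupp
    have hg1 : ContDiff ℝ 1 g := hg.of_le (by exact_mod_cast le_top)
    have h1 := key g hg1
    have h2 : (∫ x in Icc (0:ℝ) a, g x • q x) = ∫ x in (0:ℝ)..a, q x * g x := by
      rw [MeasureTheory.integral_Icc_eq_integral_Ioc,
        intervalIntegral.integral_of_le ha']
      congr 1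
      funext x
      simp [mul_comm]
    rw [h2, h1]
end
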